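/- In the Markov-modulated setting with P_π(A_1=0)=0 and P_π(B_1=0)<1, fix i∈S and suppose P_i(|A_1^i|=1)=1. Then the degeneracy condition (D) holds if and only if P_i(B̂_1^i=0)=1, where B̂_1^i=∑_{k=1}^{τ̂(i)}Π_{k-1}B_k is the additive component accumulated up to the first time τ̂(i) at which the chain is in state i with Π equal to 1. -/

import Mathlib

open MeasureTheory ProbabilityTheory Filter
open scoped ENNReal NNReal Topology

noncomputable section

namespace Perpetuities

/-- The positive part of the logarithm, with the convention `log⁺ 0 = 0`. -/
def logplus (x : ℝ) : ℝ := max (Real.log x) 0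

/-- Weak convergence of a sequence of (probability) measures on `ℝ`. -/
def WeakLim (μ : ℕ → Measure ℝ) (ν : Measure ℝ) : Prop :=
  ∀ f : BoundedContinuousFunction ℝ ℝ,
    Tendsto (fun n => ∫ x, f x ∂ μ n) atTop (nhds (∫ x, f x ∂ ν))

/-- `|f n| → ∞` in `μ`-probability. -/
def TendstoInfInMeasure {Ω : Type*} [MeasurableSpace Ω] (μ : Measure Ω) (f : ℕ → Ω → ℝ) : Prop :=
  ∀ x : ℝ, 0 < x → Tendsto (fun n => μ {ω | |f n ω| ≤ x}) atTop (nhds 0)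

/-- `d` is the lattice span (period) of the distribution of the `ℕ`-valued random
variable `T` under `μ`, i.e. `d` is the greatest common divisor of the support. -/
def LatticeSpan {Ω : Type*} [MeasurableSpace Ω] (μ : Measure Ω) (T : Ω → ℕ) (d : ℕ) : Prop :=
  (∀ n, 0 < μ {ω | T ω = n} → d ∣ n) ∧ ∀ e : ℕ, (∀ n, 0 < μ {ω | T ω = n} → e ∣ n) → e ∣ d

/-- The Markov-modulated setting: an ergodic (irreducible, aperiodic, positive recurrent)
Markov chain `M` on a countable state space `S` with transition matrix `p` and stationary
distribution `π`, modulating a sequence `(A_n, B_n)_{n ≥ 1}` of real random pairs (indexed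
here so that `A n`, `B n` are the paper's `A_{n+1}`, `B_{n+1}`): conditionally on the whole
path of the chain, the pairs are independent and the conditional law of `(A_{n+1}, B_{n+1})`
given the path depends only on `(M_n, M_{n+1})`, via the stochastic kernel `K`.
`P i` is the underlying probability measure conditioned on `M 0 = i`. -/
structure MMSetting (S : Type*) (Ω : Type*) [MeasurableSpace S] [MeasurableSingletonClass S]
    [Countable S] [MeasurableSpace Ω] where
  P : S → Measure Ω
  prob : ∀ i, IsProbabilityMeasure (P i)
  π : S → ℝ≥0∞
  πsum : ∑' i, π i = 1
  πpos : ∀ i, 0 < π i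
  p : S → S → ℝ≥0∞
  psum : ∀ i, ∑' j, p i j = 1
  stationary : ∀ j, ∑' i, π i * p i j = π j
  K : S → S → Measure (ℝ × ℝ)
  Kprob : ∀ i j, IsProbabilityMeasure (K i j)
  M : ℕ → Ω → S
  A : ℕ → Ω → ℝ
  B : ℕ → Ω → ℝ
  measM : ∀ n, Measurable (M n)
  measA : ∀ n, Measurable (A n)
  measB : ∀ n, Measurable (B n)
  start : ∀ i, P i {ω | M 0 ω = i} = 1
  chain : ∀ (i : S) (n : ℕ) (path : ℕ → S), path 0 = i →
    P i (⋂ k ∈ Finset.range (n + 1), {ω | M k ω = path k})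
      = ∏ k ∈ Finset.range n, p (path k) (path (k + 1))
  modulated : ∀ (i : S) (n : ℕ) (path : ℕ → S) (E : ℕ → Set (ℝ × ℝ)), path 0 = i →
    (∀ k, MeasurableSet (E k)) →
    P i ((⋂ k ∈ Finset.range (n + 1), {ω | M k ω = path k}) ∩
        ⋂ k ∈ Finset.range n, {ω | (A k ω, B k ω) ∈ E k})
      = P i (⋂ k ∈ Finset.range (n + 1), {ω | M k ω = path k})
        * ∏ k ∈ Finset.range n, K (path k) (path (k + 1)) (E k)
  irreducible : ∀ i j, ∃ n, 0 < P i {ω | M n ω = j}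
  recurrent : ∀ i, P i {ω | ∃ n, 0 < n ∧ M n ω = i} = 1
  posRecurrent : ∀ i, ∫⁻ ω, ((sInf {n | 0 < n ∧ M n ω = i} : ℕ) : ℝ≥0∞) ∂ P i < ⊤
  aperiodic : ∀ (i : S) (d : ℕ), (∀ n, 0 < n → 0 < P i {ω | M n ω = i} → d ∣ n) → d = 1

namespace MMSetting

variable {S : Type*} [MeasurableSpace S] [MeasurableSingletonClass S] [Countable S]
variable {Ω : Type*} [MeasurableSpace Ω]
variable (X : MMSetting S Ω)

/-- `Pπ = ∑ i, π i • P i`, the stationary (unconditional) probability measure. -/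
def Pπ : Measure Ω := Measure.sum fun i => X.π i • X.P i

/-- `Pprod n = Π_n = A_1 ⋯ A_n`, with `Π_0 = 1`. -/
def Pprod (n : ℕ) (ω : Ω) : ℝ := ∏ k ∈ Finset.range n, X.A k ω

/-- `Ssum n = ∑_{k=1}^n Π_{k-1} B_k`, the value `Ψ_1 ∘ ⋯ ∘ Ψ_n (0)` of the backward
iteration started at `0`. -/
def Ssum (n : ℕ) (ω : Ω) : ℝ := ∑ k ∈ Finset.range n, X.Pprod k ω * X.B k ω

/-- `Zb Z n = Ψ_1 ∘ ⋯ ∘ Ψ_n (Z) = Π_n Z + ∑_{k=1}^n Π_{k-1} B_k`, the backward iteration. -/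
def Zb (Z : Ω → ℝ) (n : ℕ) (ω : Ω) : ℝ := X.Pprod n ω * Z ω + X.Ssum n ω

/-- `Zf Z n = Ψ_n ∘ ⋯ ∘ Ψ_1 (Z)`, the forward iteration. -/
def Zf (Z : Ω → ℝ) : ℕ → Ω → ℝ
  | 0 => Z
  | n + 1 => fun ω => X.A n ω * Zf Z n ω + X.B n ω

/-- The perpetuity `Z_∞ = ∑_{n ≥ 1} Π_{n-1} B_n`. -/
def Zinf (ω : Ω) : ℝ := ∑' n, X.Pprod n ω * X.B n ω

/-- `tau i n = τ_n(i)`, the `n`-th return time of the driving chain to the state `i`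
(`τ_0(i) = 0`). -/
def tau (i : S) : ℕ → Ω → ℕ
  | 0 => fun _ => 0
  | n + 1 => fun ω => sInf {k | tau i n ω < k ∧ X.M k ω = i}

/-- `A_1^i = Π_{τ(i)}`. -/
def Ai (i : S) (ω : Ω) : ℝ := X.Pprod (X.tau i 1 ω) ω

/-- `B_1^i = ∑_{k=1}^{τ(i)} Π_{k-1} B_k`. -/
def Bi (i : S) (ω : Ω) : ℝ := X.Ssum (X.tau i 1 ω) ω

/-- `W^i = max_{1 ≤ k ≤ τ(i)} |Π_{k-1} B_k|`. -/
def Wi (i : S) (ω : Ω) : ℝ :=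
  (((Finset.range (X.tau i 1 ω)).sup fun k => ‖X.Pprod k ω * X.B k ω‖₊ : ℝ≥0) : ℝ)

/-- `S_{τ(i)} = - log |Π_{τ(i)}|`. -/
def Stau (i : S) (ω : Ω) : ℝ := - Real.log |X.Ai i ω|

/-- The function `J_i`: `J_i(0) = 1`, and for `x > 0`, `J_i(x) = x / E_i (S_{τ(i)}⁺ ∧ x)`
if `P_i(S_{τ(i)} ≤ 0) < 1`, and `J_i(x) = x` otherwise. -/
def Ji (i : S) (x : ℝ) : ℝ :=
  if x = 0 then 1
  else if X.P i {ω | X.Stau i ω ≤ 0} < 1 then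
    x / ∫ ω, min (max (X.Stau i ω) 0) x ∂ X.P i
  else x

/-- `τ̂(i) = inf {k ≥ 1 : M_k = i, Π_k = 1}`. -/
def hatτ (i : S) (ω : Ω) : ℕ := sInf {k | 0 < k ∧ X.M k ω = i ∧ X.Pprod k ω = 1}

/-- `Z` is an admissible initial value: it is (conditionally on `M 0`, i.e. under each `P i`)
independent of the modulated sequence `(M_n, A_n, B_n)_{n ≥ 1}`. -/
def Admissible (Z : Ω → ℝ) : Prop :=
  Measurable Z ∧
    ∀ i : S, IndepFun Z (fun ω => fun n : ℕ => (X.M (n + 1) ω, X.A n ω, X.B n ω)) (X.P i)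

/-- The degeneracy condition: `A_1 c_{M_1} + B_1 = c_{M_0}` a.s. for the family `c`. -/
def DegenD (c : S → ℝ) : Prop :=
  ∀ᵐ ω ∂ X.Pπ, X.A 0 ω * c (X.M 1 ω) + X.B 0 ω = c (X.M 0 ω)

/-- The dual degeneracy condition: `A_1 c_{M_0} + B_1 = c_{M_1}` a.s. for the family `c`. -/
def DegenDdual (c : S → ℝ) : Prop :=
  ∀ᵐ ω ∂ X.Pπ, X.A 0 ω * c (X.M 0 ω) + X.B 0 ω = c (X.M 1 ω)

end MMSetting

end Perpetuities

namespace Perpetuities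
namespace LAux

/-- running product of first coordinates -/
def PP (w : ℕ → ℝ × ℝ) (j : ℕ) : ℝ := ∏ k ∈ Finset.range j, (w k).1

/-- running weighted sum -/
def SS (w : ℕ → ℝ × ℝ) (j : ℕ) : ℝ := ∑ k ∈ Finset.range j, PP w k * (w k).2

/-- extend a finite vector by (1,0) -/
def extv {n : ℕ} (v : Fin n → ℝ × ℝ) : ℕ → ℝ × ℝ := fun k => if h : k < n then v ⟨k, h⟩ else (1, 0)

lemma PP_congr {w w' : ℕ → ℝ × ℝ} {j : ℕ} (h : ∀ k < j, w k = w' k) : PP w j = PP w' j :=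
  Finset.prod_congr rfl fun k hk => by rw [h k (Finset.mem_range.mp hk)]

lemma SS_congr {w w' : ℕ → ℝ × ℝ} {j : ℕ} (h : ∀ k < j, w k = w' k) : SS w j = SS w' j :=
  Finset.sum_congr rfl fun k hk => by
    rw [h k (Finset.mem_range.mp hk),
      PP_congr (fun m hm => h m (hm.trans (Finset.mem_range.mp hk)))]

lemma PP_add (w : ℕ → ℝ × ℝ) (a b : ℕ) :
    PP w (a + b) = PP w a * PP (fun k => w (a + k)) b := by
  simpa [PP] using Finset.prod_range_add (fun k => (w k).1) a b

lemma SS_add (w : ℕ → ℝ × ℝ) (a b : ℕ) :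
    SS w (a + b) = SS w a + PP w a * SS (fun k => w (a + k)) b := by
  unfold SS
  rw [Finset.sum_range_add, Finset.mul_sum]
  congr 1
  refine Finset.sum_congr rfl fun k _ => ?_
  rw [PP_add, mul_assoc]

lemma extv_append_lt {a b : ℕ} (x : Fin a → ℝ × ℝ) (y : Fin b → ℝ × ℝ) {k : ℕ} (hk : k < a) :
    extv (Fin.append x y) k = extv x k := by
  have hk' : k < a + b := hk.trans_le (Nat.le_add_right a b)
  simp only [extv, dif_pos hk, dif_pos hk']
  have : (⟨k, hk'⟩ : Fin (a + b)) = Fin.castAdd b ⟨k, hk⟩ := rfl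
  rw [this, Fin.append_left]

lemma extv_append_add {a b : ℕ} (x : Fin a → ℝ × ℝ) (y : Fin b → ℝ × ℝ) (k : ℕ) :
    extv (Fin.append x y) (a + k) = extv y k := by
  by_cases hk : k < b
  · have hk' : a + k < a + b := by omega
    simp only [extv, dif_pos hk, dif_pos hk']
    have : (⟨a + k, hk'⟩ : Fin (a + b)) = Fin.natAdd a ⟨k, hk⟩ := rfl
    rw [this, Fin.append_right]
  · have hk' : ¬ (a + k < a + b) := by omega
    simp only [extv, dif_neg hk, dif_neg hk']

lemma PP_append_le {a b : ℕ} (x : Fin a → ℝ × ℝ) (y : Fin b → ℝ × ℝ) {j : ℕ} (hj : j ≤ a) :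
    PP (extv (Fin.append x y)) j = PP (extv x) j :=
  PP_congr fun k hk => extv_append_lt x y (lt_of_lt_of_le hk hj)

lemma SS_append_le {a b : ℕ} (x : Fin a → ℝ × ℝ) (y : Fin b → ℝ × ℝ) {j : ℕ} (hj : j ≤ a) :
    SS (extv (Fin.append x y)) j = SS (extv x) j :=
  SS_congr fun k hk => extv_append_lt x y (lt_of_lt_of_le hk hj)

lemma PP_append (a b : ℕ) (x : Fin a → ℝ × ℝ) (y : Fin b → ℝ × ℝ) :
    PP (extv (Fin.append x y)) (a + b) = PP (extv x) a * PP (extv y) b := by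
  rw [PP_add, PP_append_le x y le_rfl]
  congr 1
  exact PP_congr fun k _ => extv_append_add x y k

lemma SS_append (a b : ℕ) (x : Fin a → ℝ × ℝ) (y : Fin b → ℝ × ℝ) :
    SS (extv (Fin.append x y)) (a + b) = SS (extv x) a + PP (extv x) a * SS (extv y) b := by
  rw [SS_add, SS_append_le x y le_rfl, PP_append_le x y le_rfl]
  congr 2
  exact SS_congr fun k _ => extv_append_add x y k

lemma PP_zero (w : ℕ → ℝ × ℝ) : PP w 0 = 1 := by simp [PP]

lemma SS_zero (w : ℕ → ℝ × ℝ) : SS w 0 = 0 := by simp [SS]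

lemma SS_one (w : ℕ → ℝ × ℝ) : SS w 1 = (w 0).2 := by simp [SS, PP]

lemma PP_one (w : ℕ → ℝ × ℝ) : PP w 1 = (w 0).1 := by simp [PP]

lemma measurable_extv_coord {n : ℕ} (k : ℕ) :
    Measurable fun v : Fin n → ℝ × ℝ => extv v k := by
  unfold extv
  by_cases h : k < n
  · simp only [dif_pos h]; exact measurable_pi_apply _
  · simp only [dif_neg h]; exact measurable_const

lemma measurable_PP_extv {n : ℕ} (j : ℕ) :
    Measurable fun v : Fin n → ℝ × ℝ => PP (extv v) j := by
  unfold PP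
  exact Finset.measurable_prod _ fun k _ => (measurable_extv_coord k).fst

lemma measurable_SS_extv {n : ℕ} (j : ℕ) :
    Measurable fun v : Fin n → ℝ × ℝ => SS (extv v) j := by
  unfold SS
  exact Finset.measurable_sum _ fun k _ =>
    (measurable_PP_extv k).mul (measurable_extv_coord k).snd

end LAux

open MMSetting

namespace MMSetting

variable {S : Type*} [MeasurableSpace S] [MeasurableSingletonClass S] [Countable S]
variable {Ω : Type*} [MeasurableSpace Ω]
variable (X : MMSetting S Ω)

open LAux

/-- cylinder set determined by the chain path up to time `n` -/
def Cy (path : ℕ → S) (n : ℕ) : Set Ω := ⋂ k ∈ Finset.range (n + 1), {ω | X.M k ω = path k}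

/-- probability weight of a path -/
def wpp (path : ℕ → S) (n : ℕ) : ℝ≥0∞ := ∏ k ∈ Finset.range n, X.p (path k) (path (k + 1))

/-- kernels along a path -/
def κv (path : ℕ → S) (n : ℕ) : Fin n → Measure (ℝ × ℝ) :=
  fun k => X.K (path k) (path (k + 1))

/-- vector of modulated pairs -/
def Φv (n : ℕ) (ω : Ω) : Fin n → ℝ × ℝ := fun k => (X.A k ω, X.B k ω)

/-- product law of the modulated pairs along a path -/
def piK (path : ℕ → S) (n : ℕ) : Measure (Fin n → ℝ × ℝ) := Measure.pi (X.κv path n)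

instance piK_prob (path : ℕ → S) (n : ℕ) : IsProbabilityMeasure (X.piK path n) := by
  have := X.Kprob
  unfold piK κv
  infer_instance

lemma measurable_Φv (n : ℕ) : Measurable (X.Φv n) :=
  measurable_pi_lambda _ fun k => (X.measA k).prodMk (X.measB k)

lemma measurableSet_Cy (path : ℕ → S) (n : ℕ) : MeasurableSet (X.Cy path n) :=
  MeasurableSet.biInter (Finset.range (n + 1)).countable_toSet fun k _ =>
    (X.measM k) (measurableSet_singleton _)

lemma mem_Cy {path : ℕ → S} {n : ℕ} {ω : Ω} :
    ω ∈ X.Cy path n ↔ ∀ k ≤ n, X.M k ω = path k := by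
  simp [Cy, Nat.lt_succ_iff]

lemma wpp_le_one (path : ℕ → S) (n : ℕ) : X.wpp path n ≤ 1 := by
  refine Finset.prod_le_one (fun k _ => zero_le) (fun k _ => ?_)
  calc X.p (path k) (path (k + 1)) ≤ ∑' j, X.p (path k) j := ENNReal.le_tsum _
  _ = 1 := X.psum _

lemma wpp_ne_top (path : ℕ → S) (n : ℕ) : X.wpp path n ≠ ⊤ :=
  (lt_of_le_of_lt (X.wpp_le_one path n) (by norm_num)).ne

lemma P_Cy {i : S} {path : ℕ → S} (hp : path 0 = i) (n : ℕ) :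
    X.P i (X.Cy path n) = X.wpp path n := X.chain i n path hp

/-- Fundamental transfer lemma: the conditional law of the modulated pairs on a cylinder. -/
lemma transfer {i : S} {path : ℕ → S} (hp : path 0 = i) (n : ℕ)
    {D : Set (Fin n → ℝ × ℝ)} (hD : MeasurableSet D) :
    X.P i (X.Cy path n ∩ X.Φv n ⁻¹' D) = X.wpp path n * X.piK path n D := by
  have hK := X.Kprob
  have hΦ := X.measurable_Φv n
  by_cases hw : X.wpp path n = 0
  · have h0 : X.P i (X.Cy path n) = 0 := by rw [X.P_Cy hp n]; exact hw
    rw [hw, zero_mul]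
    exact le_antisymm (le_trans (measure_mono Set.inter_subset_left) h0.le) zero_le
  · have hrect : ∀ s : Fin n → Set (ℝ × ℝ), (∀ k, MeasurableSet (s k)) →
        X.P i (X.Cy path n ∩ X.Φv n ⁻¹' Set.pi Set.univ s)
          = X.wpp path n * ∏ k, X.κv path n k (s k) := by
      intro s hs
      have hE : ∀ k : ℕ, MeasurableSet (if h : k < n then s ⟨k, h⟩ else Set.univ) := by
        intro k; by_cases h : k < n <;> simp [h, hs]
      have hmod := X.modulated i n path
        (fun k => if h : k < n then s ⟨k, h⟩ else Set.univ) hp hE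
      have hseteq : X.Φv n ⁻¹' Set.pi Set.univ s =
          ⋂ k ∈ Finset.range n,
            {ω | (X.A k ω, X.B k ω) ∈ (if h : k < n then s ⟨k, h⟩ else Set.univ)} := by
        ext ω
        simp only [Set.mem_preimage, Set.mem_pi, Set.mem_univ, forall_true_left,
          Set.mem_iInter, Finset.mem_range]
        constructor
        · intro hv k hk
          simp only [Set.mem_setOf_eq, dif_pos hk]
          exact hv ⟨k, hk⟩
        · intro hv k
          have := hv k k.isLt
          simpa only [Set.mem_setOf_eq, dif_pos k.isLt, Fin.eta, Φv] using this
      rw [hseteq]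
      show X.P i ((⋂ k ∈ Finset.range (n+1), {ω | X.M k ω = path k}) ∩ _) = _
      rw [hmod, X.chain i n path hp]
      show X.wpp path n * _ = _
      congr 1
      rw [← Fin.prod_univ_eq_prod_range
        (fun k => X.K (path k) (path (k+1)) (if h : k < n then s ⟨k, h⟩ else Set.univ)) n]
      exact Finset.prod_congr rfl fun k _ => by
        simp only [dif_pos k.isLt, κv]
    have hmap : Measure.map (X.Φv n) ((X.P i).restrict (X.Cy path n))
        = X.wpp path n • X.piK path n := by
      have hinv : (X.wpp path n)⁻¹ • Measure.map (X.Φv n) ((X.P i).restrict (X.Cy path n))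
          = Measure.pi (X.κv path n) := by
        haveI : ∀ k : Fin n, SigmaFinite (X.κv path n k) := fun k => by
          have := X.Kprob (path k) (path (k + 1)); unfold κv; infer_instance
        refine (Measure.pi_eq (μ := X.κv path n) fun s hs => ?_).symm
        rw [Measure.smul_apply, Measure.map_apply hΦ (MeasurableSet.univ_pi hs),
          Measure.restrict_apply (hΦ (MeasurableSet.univ_pi hs)), Set.inter_comm,
          hrect s hs, smul_eq_mul, ← mul_assoc,
          ENNReal.inv_mul_cancel hw (X.wpp_ne_top path n), one_mul]
      calc Measure.map (X.Φv n) ((X.P i).restrict (X.Cy path n))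
          = X.wpp path n • ((X.wpp path n)⁻¹
              • Measure.map (X.Φv n) ((X.P i).restrict (X.Cy path n))) := by
            rw [smul_smul, ENNReal.mul_inv_cancel hw (X.wpp_ne_top path n), one_smul]
        _ = X.wpp path n • X.piK path n := by rw [hinv]; rfl
    have heval := congrArg (fun μ : Measure (Fin n → ℝ × ℝ) => μ D) hmap
    simp only [Measure.smul_apply, smul_eq_mul] at heval
    rw [Measure.map_apply hΦ hD, Measure.restrict_apply (hΦ hD), Set.inter_comm] at heval
    exact heval

/-- null transfer -/
lemma null_transfer {i : S} {path : ℕ → S} (hp : path 0 = i) {n : ℕ}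
    {D : Set (Fin n → ℝ × ℝ)} (hD : MeasurableSet D) {N : Set Ω}
    (hN : X.P i N = 0) (hsub : X.Cy path n ∩ X.Φv n ⁻¹' D ⊆ N) (hwp : X.wpp path n ≠ 0) :
    X.piK path n D = 0 := by
  have h := X.transfer hp n hD
  have h0 : X.P i (X.Cy path n ∩ X.Φv n ⁻¹' D) = 0 :=
    le_antisymm (hN ▸ measure_mono hsub) zero_le
  rw [h0] at h
  exact (mul_eq_zero.mp h.symm).resolve_left hwp

/-- evaluation of the product law on a single-coordinate event -/
lemma piK_coord (path : ℕ → S) (n : ℕ) (k : Fin n) {E : Set (ℝ × ℝ)}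
    (hE : MeasurableSet E) :
    X.piK path n {v | v k ∈ E} = X.K (path k) (path (k + 1)) E := by
  have := X.Kprob
  have : ∀ m : Fin n, SigmaFinite (X.κv path n m) := fun m => by
    have := X.Kprob (path m) (path (m+1)); unfold κv; infer_instance
  have hset : {v : Fin n → ℝ × ℝ | v k ∈ E} =
      Set.pi Set.univ (fun j => if j = k then E else Set.univ) := by
    ext v
    simp only [Set.mem_setOf_eq, Set.mem_pi, Set.mem_univ, forall_true_left]
    constructor
    · intro h j; by_cases hj : j = k <;> simp [hj, h]
    · intro h; simpa using h k
  rw [piK, hset, Measure.pi_pi]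
  rw [Finset.prod_eq_single k (fun j _ hj => by simp [hj, κv, measure_univ])
    (by simp)]
  simp [κv]

/-- splitting the product law of a path at an intermediate time -/
lemma piK_split (path : ℕ → S) (a b : ℕ) {D : Set (Fin (a + b) → ℝ × ℝ)}
    (hD : MeasurableSet D) :
    X.piK path (a + b) D =
      ((X.piK path a).prod (X.piK (fun k => path (a + k)) b))
        ((fun xy : (Fin a → ℝ × ℝ) × (Fin b → ℝ × ℝ) => Fin.append xy.1 xy.2) ⁻¹' D) := by
  have hK := X.Kprob
  haveI : ∀ k : Fin (a + b), SigmaFinite (X.κv path (a + b) k) := fun k => by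
    have := X.Kprob (path k) (path (k + 1)); unfold κv; infer_instance
  haveI : ∀ i' : Fin a ⊕ Fin b, SigmaFinite (X.κv path (a + b) (finSumFinEquiv i')) :=
    fun i' => by infer_instance
  have h1 : MeasurePreserving
      (MeasurableEquiv.piCongrLeft (fun _ : Fin (a + b) => ℝ × ℝ) finSumFinEquiv)
      (Measure.pi fun i' => X.κv path (a + b) (finSumFinEquiv i'))
      (Measure.pi (X.κv path (a + b))) :=
    MeasureTheory.measurePreserving_piCongrLeft _ _
  have h2 : MeasurePreserving
      (MeasurableEquiv.sumPiEquivProdPi (fun _ : Fin a ⊕ Fin b => ℝ × ℝ)).symm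
      ((Measure.pi fun l : Fin a => X.κv path (a + b) (finSumFinEquiv (Sum.inl l))).prod
        (Measure.pi fun r : Fin b => X.κv path (a + b) (finSumFinEquiv (Sum.inr r))))
      (Measure.pi fun i' => X.κv path (a + b) (finSumFinEquiv i')) :=
    MeasureTheory.measurePreserving_sumPiEquivProdPi_symm
      (fun i' : Fin a ⊕ Fin b => X.κv path (a + b) (finSumFinEquiv i'))
  have hcomp := h1.comp h2
  have hl : (Measure.pi fun l : Fin a => X.κv path (a + b) (finSumFinEquiv (Sum.inl l)))
      = X.piK path a :=
    congrArg Measure.pi (funext fun l => by simp [κv, finSumFinEquiv_apply_left])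
  have hr : (Measure.pi fun r : Fin b => X.κv path (a + b) (finSumFinEquiv (Sum.inr r)))
      = X.piK (fun k => path (a + k)) b :=
    congrArg Measure.pi (funext fun r => by simp [κv, finSumFinEquiv_apply_right, Nat.add_assoc])
  rw [hl, hr] at hcomp
  have hfun : (⇑(MeasurableEquiv.piCongrLeft (fun _ : Fin (a+b) => ℝ × ℝ) finSumFinEquiv) ∘
      ⇑(MeasurableEquiv.sumPiEquivProdPi (fun _ : Fin a ⊕ Fin b => ℝ × ℝ)).symm)
      = fun xy : (Fin a → ℝ × ℝ) × (Fin b → ℝ × ℝ) => Fin.append xy.1 xy.2 := by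
    funext xy
    funext j
    rw [Function.comp_apply, MeasurableEquiv.coe_sumPiEquivProdPi_symm,
      MeasurableEquiv.coe_piCongrLeft]
    rcases h : finSumFinEquiv.symm j with l | r
    · have hj : j = finSumFinEquiv (Sum.inl l) := by
        rw [← h, Equiv.apply_symm_apply]
      subst hj
      rw [Equiv.piCongrLeft_sumInl (fun _ => ℝ × ℝ) finSumFinEquiv xy.1 xy.2 l,
        finSumFinEquiv_apply_left, Fin.append_left]
    · have hj : j = finSumFinEquiv (Sum.inr r) := by
        rw [← h, Equiv.apply_symm_apply]
      subst hj
      rw [Equiv.piCongrLeft_sumInr (fun _ => ℝ × ℝ) finSumFinEquiv xy.1 xy.2 r,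
        finSumFinEquiv_apply_right, Fin.append_right]
  rw [hfun] at hcomp
  rw [show X.piK path (a + b) = Measure.pi (X.κv path (a + b)) from rfl, ← hcomp.map_eq,
    Measure.map_apply hcomp.measurable hD]

lemma P_M_zero_ne {i j : S} (hij : j ≠ i) : X.P i {ω | X.M 0 ω = j} = 0 := by
  have := X.prob i
  have h1 : X.P i {ω | X.M 0 ω = i}ᶜ = 0 := by
    have hm : MeasurableSet {ω | X.M 0 ω = i} := (X.measM 0) (measurableSet_singleton i)
    rw [measure_compl hm (measure_ne_top _ _), X.start i]
    simp
  refine le_antisymm (le_trans (measure_mono ?_) h1.le) zero_le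
  intro ω hω
  simp only [Set.mem_setOf_eq] at hω ⊢
  simp [Set.mem_compl_iff, hω, hij]

/-- a covering argument: an event of positive measure meets some positive cylinder -/
lemma cover {i : S} (n : ℕ) (N : Set Ω)
    (h : ∀ q : ℕ → S, q 0 = i → X.P i (X.Cy q n ∩ N) = 0) :
    X.P i N = 0 := by
  have hcov : N ⊆ ⋃ q : Fin (n + 1) → S,
      (X.Cy (fun k => if hk : k < n + 1 then q ⟨k, hk⟩ else i) n ∩ N) := by
    intro ω hω
    refine Set.mem_iUnion.mpr ⟨fun k => X.M k ω, ?_, hω⟩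
    rw [X.mem_Cy]
    intro k hk
    simp [Nat.lt_succ_of_le hk]
  refine le_antisymm (le_trans (measure_mono hcov) (le_trans (measure_iUnion_le _) ?_))
    zero_le
  have hzero : ∀ q : Fin (n + 1) → S,
      X.P i (X.Cy (fun k => if hk : k < n + 1 then q ⟨k, hk⟩ else i) n ∩ N) = 0 := by
    intro q
    set qe : ℕ → S := fun k => if hk : k < n + 1 then q ⟨k, hk⟩ else i with hqe
    by_cases h0 : qe 0 = i
    · exact h qe h0
    · refine le_antisymm (le_trans (measure_mono ?_) (X.P_M_zero_ne h0).le) zero_le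
      intro ω hω
      exact (X.mem_Cy.mp hω.1) 0 (Nat.zero_le _)
  simp only [hzero, tsum_zero, le_refl]

/-- reachability: positive probability to be at `j` at time `n` yields a positive path -/
lemma reach {i j : S} {n : ℕ} (h : X.P i {ω | X.M n ω = j} ≠ 0) :
    ∃ q : ℕ → S, q 0 = i ∧ q n = j ∧ X.wpp q n ≠ 0 := by
  by_contra hcon
  push_neg at hcon
  apply h
  apply X.cover n
  intro q hq0
  by_cases hqn : q n = j
  · have hw : X.wpp q n = 0 := hcon q hq0 hqn
    refine le_antisymm (le_trans (measure_mono Set.inter_subset_left) ?_) zero_le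
    rw [X.P_Cy hq0 n]
    exact hw.le
  · have : X.Cy q n ∩ {ω | X.M n ω = j} = ∅ := by
      ext ω
      simp only [Set.mem_inter_iff, Set.mem_empty_iff_false, iff_false, not_and,
        Set.mem_setOf_eq]
      intro hω
      rw [X.mem_Cy.mp hω n le_rfl]
      exact hqn
    rw [this, measure_empty]

lemma Pπ_null_iff {N : Set Ω} (hN : MeasurableSet N) :
    X.Pπ N = 0 ↔ ∀ a, X.P a N = 0 := by
  rw [Pπ, Measure.sum_apply _ hN]
  rw [ENNReal.tsum_eq_zero]
  constructor
  · intro h a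
    have := h a
    rw [Measure.smul_apply, smul_eq_mul] at this
    exact (mul_eq_zero.mp this).resolve_left (X.πpos a).ne'
  · intro h a
    rw [Measure.smul_apply, smul_eq_mul, h a, mul_zero]

end MMSetting

namespace MMSetting

variable {S : Type*} [MeasurableSpace S] [MeasurableSingletonClass S] [Countable S]
variable {Ω : Type*} [MeasurableSpace Ω]
variable (X : MMSetting S Ω)

open LAux

lemma measurable_apply_nat {t : Ω → ℕ} (ht : Measurable t) {g : ℕ → Ω → ℝ}
    (hg : ∀ n, Measurable (g n)) : Measurable fun ω => g (t ω) ω := by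
  intro s hs
  have : (fun ω => g (t ω) ω) ⁻¹' s = ⋃ n, t ⁻¹' {n} ∩ g n ⁻¹' s := by
    ext ω
    simp only [Set.mem_preimage, Set.mem_iUnion, Set.mem_inter_iff, Set.mem_singleton_iff]
    exact ⟨fun h => ⟨t ω, rfl, h⟩, fun ⟨n, hn, h⟩ => by rw [← hn] at h; exact h⟩
  rw [this]
  exact MeasurableSet.iUnion fun n => (ht (measurableSet_singleton n)).inter (hg n hs)

lemma measurable_sInf {Q : ℕ → Ω → Prop} (hQ : ∀ k, MeasurableSet {ω | Q k ω}) :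
    Measurable fun ω => sInf {k | Q k ω} := by
  apply measurable_to_countable'
  intro n
  rcases n with _ | n
  · have hset : (fun ω => sInf {k | Q k ω}) ⁻¹' {0} =
        {ω | Q 0 ω} ∪ ⋂ m, {ω | ¬ Q m ω} := by
      ext ω
      simp only [Set.mem_preimage, Set.mem_singleton_iff, Set.mem_union, Set.mem_iInter,
        Set.mem_setOf_eq]
      constructor
      · intro h
        by_cases hne : {k | Q k ω}.Nonempty
        · left
          have hmem := Nat.sInf_mem hne
          rwa [h] at hmem
        · right
          intro m hm
          exact hne ⟨m, hm⟩
      · rintro (h0 | hall)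
        · exact Nat.eq_zero_of_le_zero (Nat.sInf_le h0)
        · have : {k | Q k ω} = ∅ := by ext m; simpa using hall m
          rw [this, Nat.sInf_empty]
    rw [hset]
    exact (hQ 0).union (MeasurableSet.iInter fun m => (hQ m).compl)
  · have hset : (fun ω => sInf {k | Q k ω}) ⁻¹' {n + 1} =
        {ω | Q (n + 1) ω} ∩ ⋂ m ∈ Finset.range (n + 1), {ω | ¬ Q m ω} := by
      ext ω
      simp only [Set.mem_preimage, Set.mem_singleton_iff, Set.mem_inter_iff, Set.mem_iInter,
        Finset.mem_range, Set.mem_setOf_eq]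
      constructor
      · intro h
        have hne : {k | Q k ω}.Nonempty := by
          by_contra hne
          have : {k | Q k ω} = ∅ := Set.not_nonempty_iff_eq_empty.mp hne
          rw [this, Nat.sInf_empty] at h
          exact Nat.succ_ne_zero n h.symm
        have hmem := Nat.sInf_mem hne
        rw [h] at hmem
        exact ⟨hmem, fun m hm => Nat.notMem_of_lt_sInf (h ▸ hm)⟩
      · rintro ⟨hn, hlt⟩
        refine le_antisymm (Nat.sInf_le hn) ?_
        by_contra hcon
        push_neg at hcon
        have hmem : sInf {k | Q k ω} ∈ {k | Q k ω} := Nat.sInf_mem ⟨n + 1, hn⟩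
        exact hlt _ hcon hmem
    rw [hset]
    exact (hQ (n + 1)).inter
      (MeasurableSet.biInter (Finset.range (n + 1)).countable_toSet fun m _ => (hQ m).compl)

lemma measurable_Pprod (n : ℕ) : Measurable (X.Pprod n) :=
  Finset.measurable_prod _ fun k _ => X.measA k

lemma measurable_Ssum (n : ℕ) : Measurable (X.Ssum n) :=
  Finset.measurable_sum _ fun k _ => (X.measurable_Pprod k).mul (X.measB k)

lemma tau_one_def (i : S) : X.tau i 1 = fun ω => sInf {k | 0 < k ∧ X.M k ω = i} := rfl

lemma measurable_tau_one (i : S) : Measurable (X.tau i 1) := by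
  rw [tau_one_def]
  exact measurable_sInf fun k => by
    by_cases hk : 0 < k
    · have : {ω | 0 < k ∧ X.M k ω = i} = {ω | X.M k ω = i} := by
        ext ω; simp [hk]
      rw [this]; exact (X.measM k) (measurableSet_singleton i)
    · have : {ω | 0 < k ∧ X.M k ω = i} = ∅ := by
        ext ω; simp [hk]
      rw [this]; exact MeasurableSet.empty

lemma measurable_Ai (i : S) : Measurable (X.Ai i) :=
  measurable_apply_nat (X.measurable_tau_one i) (fun n => X.measurable_Pprod n)

lemma measurable_hatτ (i : S) : Measurable (X.hatτ i) := by
  unfold hatτ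
  exact measurable_sInf fun k => by
    by_cases hk : 0 < k
    · have : {ω | 0 < k ∧ X.M k ω = i ∧ X.Pprod k ω = 1} =
          {ω | X.M k ω = i} ∩ X.Pprod k ⁻¹' {1} := by
        ext ω
        simp only [Set.mem_setOf_eq, Set.mem_inter_iff, Set.mem_preimage,
          Set.mem_singleton_iff, hk, true_and]
      rw [this]
      exact ((X.measM k) (measurableSet_singleton i)).inter
        ((X.measurable_Pprod k) (measurableSet_singleton 1))
    · have : {ω | 0 < k ∧ X.M k ω = i ∧ X.Pprod k ω = 1} = ∅ := by
        ext ω; simp [hk]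
      rw [this]; exact MeasurableSet.empty

lemma measurable_Shat (i : S) : Measurable fun ω => X.Ssum (X.hatτ i ω) ω :=
  measurable_apply_nat (X.measurable_hatτ i) (fun n => X.measurable_Ssum n)

lemma Φv_PP {n j : ℕ} (hj : j ≤ n) (ω : Ω) :
    PP (extv (X.Φv n ω)) j = X.Pprod j ω := by
  unfold PP Pprod
  refine Finset.prod_congr rfl fun k hk => ?_
  have hkn : k < n := lt_of_lt_of_le (Finset.mem_range.mp hk) hj
  simp [extv, hkn, Φv]

lemma Φv_SS {n j : ℕ} (hj : j ≤ n) (ω : Ω) :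
    SS (extv (X.Φv n ω)) j = X.Ssum j ω := by
  unfold SS Ssum
  refine Finset.sum_congr rfl fun k hk => ?_
  have hkn : k < n := lt_of_lt_of_le (Finset.mem_range.mp hk) hj
  rw [X.Φv_PP (le_of_lt (lt_of_lt_of_le (Finset.mem_range.mp hk) hj)) ω]
  simp [extv, hkn, Φv]

/-- kernels along a positive path kill `{A = 0}` -/
lemma K_A_ne_zero (hA : X.Pπ {ω | X.A 0 ω = 0} = 0) {a b : S} (hp : X.p a b ≠ 0) :
    X.K a b {q : ℝ × ℝ | q.1 = 0} = 0 := by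
  have hmeasset : MeasurableSet {ω | X.A 0 ω = 0} := (X.measA 0) (measurableSet_singleton 0)
  have hPa : X.P a {ω | X.A 0 ω = 0} = 0 := (X.Pπ_null_iff hmeasset).mp hA a
  set path : ℕ → S := fun k => if k = 0 then a else b with hpath
  have hE0 : MeasurableSet {q : ℝ × ℝ | q.1 = 0} :=
    measurable_fst (measurableSet_singleton 0)
  have hD : MeasurableSet {v : Fin 1 → ℝ × ℝ | (v 0).1 = 0} :=
    ((measurable_pi_apply (0 : Fin 1)).fst (measurableSet_singleton 0))
  have hsub : X.Cy path 1 ∩ X.Φv 1 ⁻¹' {v | (v 0).1 = 0} ⊆ {ω | X.A 0 ω = 0} := by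
    intro ω hω
    exact hω.2
  have h := X.null_transfer (i := a) (by simp [hpath]) hD hPa hsub ?hw
  case hw =>
    have : X.wpp path 1 = X.p a b := by simp [wpp, hpath]
    rw [this]; exact hp
  have hcoord := X.piK_coord path 1 0 (E := {q : ℝ × ℝ | q.1 = 0}) hE0
  rw [show {v : Fin 1 → ℝ × ℝ | (v 0).1 = 0} = {v : Fin 1 → ℝ × ℝ | v 0 ∈ {q : ℝ × ℝ | q.1 = 0}} from rfl] at h
  rw [hcoord] at h
  simpa [hpath] using h

/-- a.s. the running products along a positive path never vanish -/
lemma piK_PP_ne_zero (hA : X.Pπ {ω | X.A 0 ω = 0} = 0) (path : ℕ → S) (n : ℕ)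
    (hw : X.wpp path n ≠ 0) :
    X.piK path n {v | ∃ j, j ≤ n ∧ PP (extv v) j = 0} = 0 := by
  have hps : ∀ k, k < n → X.p (path k) (path (k + 1)) ≠ 0 := by
    intro k hk hzero
    exact hw (Finset.prod_eq_zero (Finset.mem_range.mpr hk) hzero)
  have hsub : {v : Fin n → ℝ × ℝ | ∃ j, j ≤ n ∧ PP (extv v) j = 0} ⊆
      ⋃ k : Fin n, {v | v k ∈ {q : ℝ × ℝ | q.1 = 0}} := by
    rintro v ⟨j, hj, hPP⟩
    obtain ⟨k, hk, hzero⟩ := Finset.prod_eq_zero_iff.mp hPP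
    have hkj : k < j := Finset.mem_range.mp hk
    have hkn : k < n := lt_of_lt_of_le hkj hj
    refine Set.mem_iUnion.mpr ⟨⟨k, hkn⟩, ?_⟩
    simp only [Set.mem_setOf_eq]
    simpa [extv, hkn] using hzero
  refine le_antisymm (le_trans (measure_mono hsub) (le_trans (measure_iUnion_le _) ?_)) zero_le
  have : ∀ k : Fin n, X.piK path n {v | v k ∈ {q : ℝ × ℝ | q.1 = 0}} = 0 := by
    intro k
    rw [X.piK_coord path n k (E := {q : ℝ × ℝ | q.1 = 0})
      (measurable_fst (measurableSet_singleton 0))]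
    exact X.K_A_ne_zero hA (hps k k.isLt)
  exact le_of_eq (by simp only [ENNReal.tsum_eq_zero]; exact fun k => this k)

end MMSetting

namespace MMSetting

variable {S : Type*} [MeasurableSpace S] [MeasurableSingletonClass S] [Countable S]
variable {Ω : Type*} [MeasurableSpace Ω]
variable (X : MMSetting S Ω)

open LAux

lemma measurable_degen_set (c : S → ℝ) :
    MeasurableSet {ω | X.A 0 ω * c (X.M 1 ω) + X.B 0 ω ≠ c (X.M 0 ω)} := by
  have h1 : Measurable fun ω => X.A 0 ω * c (X.M 1 ω) + X.B 0 ω :=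
    ((X.measA 0).mul ((measurable_of_countable c).comp (X.measM 1))).add (X.measB 0)
  have h2 : Measurable fun ω => c (X.M 0 ω) := (measurable_of_countable c).comp (X.measM 0)
  exact (measurableSet_eq_fun h1 h2).compl

omit [MeasurableSpace S] [MeasurableSingletonClass S] [Countable S] in
lemma measurable_degen_K (c : S → ℝ) (a b : S) :
    MeasurableSet {q : ℝ × ℝ | q.1 * c b + q.2 ≠ c a} := by
  have h1 : Measurable fun q : ℝ × ℝ => q.1 * c b + q.2 :=
    (measurable_fst.mul measurable_const).add measurable_snd
  exact (measurableSet_eq_fun h1 measurable_const).compl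

lemma K_degen {c : S → ℝ} {a b : S} (hp : X.p a b ≠ 0)
    (h : X.P a {ω | X.A 0 ω * c (X.M 1 ω) + X.B 0 ω ≠ c (X.M 0 ω)} = 0) :
    X.K a b {q : ℝ × ℝ | q.1 * c b + q.2 ≠ c a} = 0 := by
  set path : ℕ → S := fun k => if k = 0 then a else b with hpath
  have hE : MeasurableSet {q : ℝ × ℝ | q.1 * c b + q.2 ≠ c a} := measurable_degen_K c a b
  have hD : MeasurableSet {v : Fin 1 → ℝ × ℝ | v 0 ∈ {q : ℝ × ℝ | q.1 * c b + q.2 ≠ c a}} :=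
    (measurable_pi_apply (0 : Fin 1)) hE
  have hsub : X.Cy path 1 ∩ X.Φv 1 ⁻¹' {v | v 0 ∈ {q : ℝ × ℝ | q.1 * c b + q.2 ≠ c a}} ⊆
      {ω | X.A 0 ω * c (X.M 1 ω) + X.B 0 ω ≠ c (X.M 0 ω)} := by
    rintro ω ⟨hcy, hv⟩
    have hM0 : X.M 0 ω = a := by simpa [hpath] using X.mem_Cy.mp hcy 0 (by norm_num)
    have hM1 : X.M 1 ω = b := by simpa [hpath] using X.mem_Cy.mp hcy 1 le_rfl
    have : (X.A 0 ω, X.B 0 ω).1 * c b + (X.A 0 ω, X.B 0 ω).2 ≠ c a := hv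
    simpa [hM0, hM1] using this
  have hwp : X.wpp path 1 ≠ 0 := by
    have : X.wpp path 1 = X.p a b := by simp [wpp, hpath]
    rw [this]; exact hp
  have hnull := X.null_transfer (i := a) (by simp [hpath]) hD h hsub hwp
  have hcoord := X.piK_coord path 1 0 (E := {q : ℝ × ℝ | q.1 * c b + q.2 ≠ c a}) hE
  rw [hcoord] at hnull
  simpa [hpath] using hnull

lemma P_degen_of_K {c : S → ℝ} (a : S)
    (h : ∀ b, X.p a b ≠ 0 → X.K a b {q : ℝ × ℝ | q.1 * c b + q.2 ≠ c a} = 0) :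
    X.P a {ω | X.A 0 ω * c (X.M 1 ω) + X.B 0 ω ≠ c (X.M 0 ω)} = 0 := by
  apply X.cover 1
  intro q hq0
  set b := q 1 with hb
  have hE : MeasurableSet {q' : ℝ × ℝ | q'.1 * c b + q'.2 ≠ c a} := measurable_degen_K c a b
  have hD : MeasurableSet {v : Fin 1 → ℝ × ℝ | v 0 ∈ {q' : ℝ × ℝ | q'.1 * c b + q'.2 ≠ c a}} :=
    (measurable_pi_apply (0 : Fin 1)) hE
  have hsub : X.Cy q 1 ∩ {ω | X.A 0 ω * c (X.M 1 ω) + X.B 0 ω ≠ c (X.M 0 ω)} ⊆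
      X.Cy q 1 ∩ X.Φv 1 ⁻¹' {v | v 0 ∈ {q' : ℝ × ℝ | q'.1 * c b + q'.2 ≠ c a}} := by
    rintro ω ⟨hcy, hbad⟩
    refine ⟨hcy, ?_⟩
    have hM0 : X.M 0 ω = a := by rw [X.mem_Cy.mp hcy 0 (by norm_num), hq0]
    have hM1 : X.M 1 ω = b := X.mem_Cy.mp hcy 1 le_rfl
    show (X.A 0 ω, X.B 0 ω).1 * c b + (X.A 0 ω, X.B 0 ω).2 ≠ c a
    simp only [Set.mem_setOf_eq, hM0, hM1] at hbad
    exact hbad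
  refine le_antisymm (le_trans (measure_mono hsub) ?_) zero_le
  rw [X.transfer hq0 1 hD]
  by_cases hp : X.p a b = 0
  · have : X.wpp q 1 = 0 := by
      have : X.wpp q 1 = X.p a b := by simp [wpp, hq0, hb]
      rw [this, hp]
    rw [this, zero_mul]
  · rw [X.piK_coord q 1 0 (E := {q' : ℝ × ℝ | q'.1 * c b + q'.2 ≠ c a}) hE]
    have hq0' : q (0 : ℕ) = a := hq0
    have : X.K (q (0 : ℕ)) (q (0 + 1 : ℕ)) {q' : ℝ × ℝ | q'.1 * c b + q'.2 ≠ c a} = 0 := by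
      rw [hq0']
      exact h b hp
    rw [show ((0 : Fin 1) : ℕ) = (0 : ℕ) from rfl, this, mul_zero]

/-- forward direction of Lemma 6.2 -/
lemma degen_forward (i : S) (c : S → ℝ) (hDc : X.DegenD c) :
    X.P i {ω | X.Ssum (X.hatτ i ω) ω = 0} = 1 := by
  have hprob := X.prob i
  -- the one-step degeneracy holds `P a`-a.s. for every `a`
  have hPa : ∀ a, X.P a {ω | X.A 0 ω * c (X.M 1 ω) + X.B 0 ω ≠ c (X.M 0 ω)} = 0 := by
    intro a
    have h0 : X.Pπ {ω | X.A 0 ω * c (X.M 1 ω) + X.B 0 ω ≠ c (X.M 0 ω)} = 0 := by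
      have := hDc
      rw [DegenD, ae_iff] at this
      exact this
    exact (X.Pπ_null_iff (X.measurable_degen_set c)).mp h0 a
  -- hence the kernel identity
  have hK : ∀ a b, X.p a b ≠ 0 → X.K a b {q : ℝ × ℝ | q.1 * c b + q.2 ≠ c a} = 0 :=
    fun a b hp => X.K_degen hp (hPa a)
  -- the n-step degeneracy holds `P i`-a.s.
  have hbadn : ∀ n : ℕ,
      X.P i {ω | X.A n ω * c (X.M (n + 1) ω) + X.B n ω ≠ c (X.M n ω)} = 0 := by
    intro n
    apply X.cover (n + 1)
    intro q hq0
    set a := q n with ha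
    set b := q (n + 1) with hb
    have hE : MeasurableSet {q' : ℝ × ℝ | q'.1 * c b + q'.2 ≠ c a} := measurable_degen_K c a b
    set kk : Fin (n + 1) := ⟨n, Nat.lt_succ_self n⟩ with hkk
    have hD : MeasurableSet {v : Fin (n + 1) → ℝ × ℝ |
        v kk ∈ {q' : ℝ × ℝ | q'.1 * c b + q'.2 ≠ c a}} := (measurable_pi_apply kk) hE
    have hsub : X.Cy q (n + 1) ∩ {ω | X.A n ω * c (X.M (n + 1) ω) + X.B n ω ≠ c (X.M n ω)} ⊆
        X.Cy q (n + 1) ∩ X.Φv (n + 1) ⁻¹'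
          {v | v kk ∈ {q' : ℝ × ℝ | q'.1 * c b + q'.2 ≠ c a}} := by
      rintro ω ⟨hcy, hbad⟩
      refine ⟨hcy, ?_⟩
      have hMn : X.M n ω = a := X.mem_Cy.mp hcy n (Nat.le_succ n)
      have hMn1 : X.M (n + 1) ω = b := X.mem_Cy.mp hcy (n + 1) le_rfl
      show (X.A n ω, X.B n ω).1 * c b + (X.A n ω, X.B n ω).2 ≠ c a
      simp only [Set.mem_setOf_eq, hMn, hMn1] at hbad
      exact hbad
    refine le_antisymm (le_trans (measure_mono hsub) ?_) zero_le
    rw [X.transfer hq0 (n + 1) hD]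
    by_cases hp : X.p a b = 0
    · have hw : X.wpp q (n + 1) = 0 := by
        apply Finset.prod_eq_zero (Finset.mem_range.mpr (Nat.lt_succ_self n))
        exact hp
      rw [hw, zero_mul]
    · rw [X.piK_coord q (n + 1) kk (E := {q' : ℝ × ℝ | q'.1 * c b + q'.2 ≠ c a}) hE]
      have hcoe : ((kk : Fin (n + 1)) : ℕ) = n := rfl
      rw [show X.K (q (kk : ℕ)) (q ((kk : ℕ) + 1)) {q' : ℝ × ℝ | q'.1 * c b + q'.2 ≠ c a}
          = X.K a b {q' : ℝ × ℝ | q'.1 * c b + q'.2 ≠ c a} by rw [hcoe], hK a b hp, mul_zero]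
  -- assemble the a.s.-good set
  set good : Set Ω := {ω | X.M 0 ω = i} ∩
    ⋂ n, {ω | X.A n ω * c (X.M (n + 1) ω) + X.B n ω = c (X.M n ω)} with hgood
  have hgood_meas : MeasurableSet good := by
    refine MeasurableSet.inter ((X.measM 0) (measurableSet_singleton i)) ?_
    refine MeasurableSet.iInter fun n => ?_
    have h1 : Measurable fun ω => X.A n ω * c (X.M (n + 1) ω) + X.B n ω :=
      ((X.measA n).mul ((measurable_of_countable c).comp (X.measM (n + 1)))).add (X.measB n)
    exact measurableSet_eq_fun h1 ((measurable_of_countable c).comp (X.measM n))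
  have hgood_one : X.P i good = 1 := by
    have hcompl : X.P i goodᶜ = 0 := by
      rw [hgood]
      rw [Set.compl_inter]
      refine le_antisymm (le_trans (measure_union_le _ _) ?_) zero_le
      have h1 : X.P i {ω | X.M 0 ω = i}ᶜ = 0 := by
        have hm : MeasurableSet {ω | X.M 0 ω = i} := (X.measM 0) (measurableSet_singleton i)
        rw [measure_compl hm (measure_ne_top _ _), X.start i]
        simp
      have h2 : X.P i (⋂ n, {ω | X.A n ω * c (X.M (n + 1) ω) + X.B n ω = c (X.M n ω)})ᶜ = 0 := by
        rw [Set.compl_iInter]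
        refine le_antisymm (le_trans (measure_iUnion_le _) ?_) zero_le
        have : ∀ n, X.P i {ω | X.A n ω * c (X.M (n + 1) ω) + X.B n ω = c (X.M n ω)}ᶜ = 0 := by
          intro n
          have hset : {ω | X.A n ω * c (X.M (n + 1) ω) + X.B n ω = c (X.M n ω)}ᶜ
              = {ω | X.A n ω * c (X.M (n + 1) ω) + X.B n ω ≠ c (X.M n ω)} := by
            ext ω; simp
          rw [hset]
          exact hbadn n
        exact le_of_eq (by simp only [ENNReal.tsum_eq_zero]; exact fun n => this n)
      rw [h1, h2, add_zero]
    rwa [prob_compl_eq_zero_iff hgood_meas] at hcompl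
  -- pointwise: on `good`, the invariance identity holds at all times
  have hpoint : good ⊆ {ω | X.Ssum (X.hatτ i ω) ω = 0} := by
    rintro ω ⟨hM0, hall⟩
    have hall' : ∀ n, X.A n ω * c (X.M (n + 1) ω) + X.B n ω = c (X.M n ω) := by
      intro n
      have := Set.mem_iInter.mp hall n
      exact this
    have hM0' : X.M 0 ω = i := hM0
    have key : ∀ n, X.Pprod n ω * c (X.M n ω) + X.Ssum n ω = c i := by
      intro n
      induction n with
      | zero => simp [Pprod, Ssum, hM0']
      | succ n ih =>
        have hP : X.Pprod (n + 1) ω = X.Pprod n ω * X.A n ω := Finset.prod_range_succ _ n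
        have hS : X.Ssum (n + 1) ω = X.Ssum n ω + X.Pprod n ω * X.B n ω :=
          Finset.sum_range_succ _ n
        rw [hP, hS, ← ih, ← hall' n]
        ring
    show X.Ssum (X.hatτ i ω) ω = 0
    by_cases hne : {k | 0 < k ∧ X.M k ω = i ∧ X.Pprod k ω = 1}.Nonempty
    · have hmem := Nat.sInf_mem hne
      set t := sInf {k | 0 < k ∧ X.M k ω = i ∧ X.Pprod k ω = 1} with ht
      have htt : X.hatτ i ω = t := rfl
      obtain ⟨htpos, htM, htP⟩ := hmem
      have := key t
      rw [htM, htP, one_mul] at this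
      rw [htt]
      linarith
    · have hempty : {k | 0 < k ∧ X.M k ω = i ∧ X.Pprod k ω = 1} = ∅ :=
        Set.not_nonempty_iff_eq_empty.mp hne
      have : X.hatτ i ω = 0 := by
        rw [hatτ, hempty, Nat.sInf_empty]
      rw [this]
      simp [Ssum]
  refine le_antisymm prob_le_one ?_
  calc (1 : ℝ≥0∞) = X.P i good := hgood_one.symm
  _ ≤ X.P i {ω | X.Ssum (X.hatτ i ω) ω = 0} := measure_mono hpoint

end MMSetting

namespace MMSetting

variable {S : Type*} [MeasurableSpace S] [MeasurableSingletonClass S] [Countable S]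
variable {Ω : Type*} [MeasurableSpace Ω]
variable (X : MMSetting S Ω)

open LAux

/-- first-return loop at `i` -/
def FRL (i : S) (lam : ℕ → S) (n : ℕ) : Prop :=
  lam 0 = i ∧ lam n = i ∧ 0 < n ∧ (∀ k, 0 < k → k < n → lam k ≠ i) ∧ X.wpp lam n ≠ 0

/-- loop at `i` -/
def IsLoop (i : S) (lam : ℕ → S) (n : ℕ) : Prop :=
  lam 0 = i ∧ lam n = i ∧ 0 < n ∧ X.wpp lam n ≠ 0

lemma measurable_PPset {n : ℕ} (j : ℕ) (E : Set ℝ) (hE : MeasurableSet E) :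
    MeasurableSet {v : Fin n → ℝ × ℝ | PP (extv v) j ∈ E} := (measurable_PP_extv j) hE

lemma measurable_SSset {n : ℕ} (j : ℕ) (E : Set ℝ) (hE : MeasurableSet E) :
    MeasurableSet {v : Fin n → ℝ × ℝ | SS (extv v) j ∈ E} := (measurable_SS_extv j) hE

/-- the product of the modulating factors along a first-return loop has modulus 1 a.s. -/
lemma frl_abs_one {i : S} (hAiN : X.P i {ω | ¬ |X.Ai i ω| = 1} = 0)
    {lam : ℕ → S} {n : ℕ} (h : X.FRL i lam n) :
    X.piK lam n {v | ¬ |PP (extv v) n| = 1} = 0 := by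
  obtain ⟨h0, hn, hpos, hfr, hwp⟩ := h
  have hD : MeasurableSet {v : Fin n → ℝ × ℝ | ¬ |PP (extv v) n| = 1} :=
    (((measurable_PP_extv (n := n) n).abs) (measurableSet_singleton 1)).compl
  refine X.null_transfer h0 hD hAiN ?_ hwp
  rintro ω ⟨hcy, hv⟩
  have htau : X.tau i 1 ω = n := by
    have hmem : n ∈ {k | 0 < k ∧ X.M k ω = i} := ⟨hpos, by rw [X.mem_Cy.mp hcy n le_rfl, hn]⟩
    rw [tau_one_def]
    refine le_antisymm (Nat.sInf_le hmem) ?_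
    by_contra hcon
    push_neg at hcon
    have hsmem : sInf {k | 0 < k ∧ X.M k ω = i} ∈ {k | 0 < k ∧ X.M k ω = i} :=
      Nat.sInf_mem ⟨n, hmem⟩
    obtain ⟨hspos, hsM⟩ := hsmem
    rw [X.mem_Cy.mp hcy _ (le_of_lt hcon)] at hsM
    exact hfr _ hspos hcon hsM
  show ¬ |X.Ai i ω| = 1
  rw [Ai, htau, ← X.Φv_PP (le_refl n) ω]
  exact hv

/-- the stopped sum constraint along loops, from `Ŝ = 0` a.s. -/
lemma loop_constraint {i : S} (hSN : X.P i {ω | X.Ssum (X.hatτ i ω) ω ≠ 0} = 0)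
    {lam : ℕ → S} {n : ℕ} (h : X.IsLoop i lam n) :
    X.piK lam n {v | (∀ k, 0 < k → k < n → lam k = i → PP (extv v) k ≠ 1) ∧
      PP (extv v) n = 1 ∧ SS (extv v) n ≠ 0} = 0 := by
  obtain ⟨h0, hn, hpos, hwp⟩ := h
  classical
  have hD : MeasurableSet {v : Fin n → ℝ × ℝ | (∀ k, 0 < k → k < n → lam k = i →
      PP (extv v) k ≠ 1) ∧ PP (extv v) n = 1 ∧ SS (extv v) n ≠ 0} := by
    have h1 : {v : Fin n → ℝ × ℝ | ∀ k, 0 < k → k < n → lam k = i → PP (extv v) k ≠ 1} =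
        ⋂ k ∈ Finset.filter (fun k => 0 < k ∧ lam k = i) (Finset.range n),
          {v : Fin n → ℝ × ℝ | PP (extv v) k ≠ 1} := by
      ext v
      simp only [Set.mem_setOf_eq, Set.mem_iInter, Finset.mem_filter, Finset.mem_range]
      constructor
      · rintro hv k ⟨hkn, hk0, hki⟩
        exact hv k hk0 hkn hki
      · intro hv k hk0 hkn hki
        exact hv k ⟨hkn, hk0, hki⟩
    have hm1 : MeasurableSet {v : Fin n → ℝ × ℝ | ∀ k, 0 < k → k < n → lam k = i →
        PP (extv v) k ≠ 1} := by
      rw [h1]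
      exact MeasurableSet.biInter (Finset.filter _ _).countable_toSet fun k _ =>
        ((measurable_PP_extv k) (measurableSet_singleton 1)).compl
    exact hm1.inter ((((measurable_PP_extv (n := n) n) (measurableSet_singleton 1))).inter
      (((measurable_SS_extv (n := n) n) (measurableSet_singleton 0)).compl))
  refine X.null_transfer h0 hD hSN ?_ hwp
  rintro ω ⟨hcy, hv⟩
  obtain ⟨hvfilter, hvPP, hvSS⟩ := hv
  have hhat : X.hatτ i ω = n := by
    have hPn : X.Pprod n ω = 1 := by rw [← X.Φv_PP (le_refl n) ω]; exact hvPP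
    have hmem : n ∈ {k | 0 < k ∧ X.M k ω = i ∧ X.Pprod k ω = 1} :=
      ⟨hpos, by rw [X.mem_Cy.mp hcy n le_rfl, hn], hPn⟩
    rw [hatτ]
    refine le_antisymm (Nat.sInf_le hmem) ?_
    by_contra hcon
    push_neg at hcon
    have hsmem : sInf {k | 0 < k ∧ X.M k ω = i ∧ X.Pprod k ω = 1} ∈
        {k | 0 < k ∧ X.M k ω = i ∧ X.Pprod k ω = 1} := Nat.sInf_mem ⟨n, hmem⟩
    obtain ⟨hspos, hsM, hsP⟩ := hsmem
    set s := sInf {k | 0 < k ∧ X.M k ω = i ∧ X.Pprod k ω = 1}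
    have hlami : lam s = i := by rw [← X.mem_Cy.mp hcy s (le_of_lt hcon)]; exact hsM
    refine hvfilter s hspos hcon hlami ?_
    rw [X.Φv_PP (le_of_lt hcon) ω]
    exact hsP
  show X.Ssum (X.hatτ i ω) ω ≠ 0
  rw [hhat, ← X.Φv_SS (le_refl n) ω]
  exact hvSS

end MMSetting

namespace MMSetting

variable {S : Type*} [MeasurableSpace S] [MeasurableSingletonClass S] [Countable S]
variable {Ω : Type*} [MeasurableSpace Ω]
variable (X : MMSetting S Ω)

open LAux

lemma piK_congr {path path' : ℕ → S} {n : ℕ} (h : ∀ k ≤ n, path k = path' k) :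
    X.piK path n = X.piK path' n := by
  refine congrArg Measure.pi (funext fun k => ?_)
  unfold κv
  rw [h k (le_of_lt k.isLt), h (k + 1) (Nat.succ_le_of_lt k.isLt)]

lemma wpp_congr {path path' : ℕ → S} {n : ℕ} (h : ∀ k ≤ n, path k = path' k) :
    X.wpp path n = X.wpp path' n := by
  refine Finset.prod_congr rfl fun k hk => ?_
  have hk' := Finset.mem_range.mp hk
  rw [h k (le_of_lt hk'), h (k + 1) (Nat.succ_le_of_lt hk')]

lemma wpp_add (path : ℕ → S) (a b : ℕ) :
    X.wpp path (a + b) = X.wpp path a * X.wpp (fun k => path (a + k)) b := by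
  unfold wpp
  rw [Finset.prod_range_add]
  rfl

/-- pairing two first-return loops: if both have product `-1`, their sums agree a.s. -/
lemma loop_pair {i : S} (hSN : X.P i {ω | X.Ssum (X.hatτ i ω) ω ≠ 0} = 0)
    {lam1 lam2 : ℕ → S} {n1 n2 : ℕ} (h1 : X.FRL i lam1 n1) (h2 : X.FRL i lam2 n2) :
    ((X.piK lam1 n1).prod (X.piK lam2 n2)) {xy | PP (extv xy.1) n1 = -1 ∧
      PP (extv xy.2) n2 = -1 ∧ SS (extv xy.1) n1 ≠ SS (extv xy.2) n2} = 0 := by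
  classical
  obtain ⟨h10, h1n, h1pos, h1fr, h1wp⟩ := h1
  obtain ⟨h20, h2n, h2pos, h2fr, h2wp⟩ := h2
  set jp : ℕ → S := fun k => if k < n1 then lam1 k else lam2 (k - n1) with hjp
  have hjp1 : ∀ k ≤ n1, jp k = lam1 k := by
    intro k hk
    rcases lt_or_eq_of_le hk with hk' | hk'
    · simp [hjp, hk']
    · subst hk'
      simp only [hjp, lt_irrefl, if_false, Nat.sub_self]
      rw [h20, h1n]
  have hjp2 : ∀ k, jp (n1 + k) = lam2 k := by
    intro k
    simp only [hjp]
    rw [if_neg (by omega), Nat.add_sub_cancel_left]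
  have hwpj : X.wpp jp (n1 + n2) = X.wpp lam1 n1 * X.wpp lam2 n2 := by
    rw [X.wpp_add jp n1 n2]
    congr 1
    · exact X.wpp_congr (fun k hk => hjp1 k hk)
    · exact X.wpp_congr (fun k _ => hjp2 k)
  have hloop : X.IsLoop i jp (n1 + n2) := by
    refine ⟨by rw [hjp1 0 (Nat.zero_le _), h10], by rw [hjp2 n2, h2n], by omega, ?_⟩
    rw [hwpj]
    exact mul_ne_zero h1wp h2wp
  have hC := X.loop_constraint hSN hloop
  have hDc : MeasurableSet {v : Fin (n1 + n2) → ℝ × ℝ |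
      (∀ k, 0 < k → k < n1 + n2 → jp k = i → PP (extv v) k ≠ 1) ∧
      PP (extv v) (n1 + n2) = 1 ∧ SS (extv v) (n1 + n2) ≠ 0} := by
    have h1' : {v : Fin (n1 + n2) → ℝ × ℝ | ∀ k, 0 < k → k < n1 + n2 → jp k = i →
        PP (extv v) k ≠ 1} =
        ⋂ k ∈ Finset.filter (fun k => 0 < k ∧ jp k = i) (Finset.range (n1 + n2)),
          {v : Fin (n1 + n2) → ℝ × ℝ | PP (extv v) k ≠ 1} := by
      ext v
      simp only [Set.mem_setOf_eq, Set.mem_iInter, Finset.mem_filter, Finset.mem_range]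
      exact ⟨fun hv k ⟨hkn, hk0, hki⟩ => hv k hk0 hkn hki,
        fun hv k hk0 hkn hki => hv k ⟨hkn, hk0, hki⟩⟩
    have hm1 : MeasurableSet {v : Fin (n1 + n2) → ℝ × ℝ | ∀ k, 0 < k → k < n1 + n2 →
        jp k = i → PP (extv v) k ≠ 1} := by
      rw [h1']
      exact MeasurableSet.biInter (Finset.filter _ _).countable_toSet fun k _ =>
        ((measurable_PP_extv k) (measurableSet_singleton 1)).compl
    exact hm1.inter (MeasurableSet.inter
      ((measurable_PP_extv (n1 + n2)) (measurableSet_singleton 1))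
      (((measurable_SS_extv (n1 + n2)) (measurableSet_singleton 0)).compl))
  rw [X.piK_split jp n1 n2 hDc] at hC
  rw [X.piK_congr (fun k hk => hjp1 k hk),
    X.piK_congr (path := fun k => jp (n1 + k)) (path' := lam2) (n := n2)
      (fun k _ => hjp2 k)] at hC
  refine measure_mono_null ?_ hC
  rintro ⟨x, y⟩ ⟨hx, hy, hne⟩
  simp only [Set.mem_preimage, Set.mem_setOf_eq]
  have hPPn1 : PP (extv (Fin.append x y)) n1 = -1 := by
    rw [PP_append_le x y le_rfl]; exact hx
  refine ⟨?_, ?_, ?_⟩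
  · intro k hk0 hkn hki
    rcases lt_trichotomy k n1 with hlt | heq | hgt
    · exfalso
      rw [hjp1 k (le_of_lt hlt)] at hki
      exact h1fr k hk0 hlt hki
    · subst heq
      rw [hPPn1]
      norm_num
    · exfalso
      obtain ⟨m, rfl⟩ : ∃ m, k = n1 + m := ⟨k - n1, by omega⟩
      rw [hjp2 m] at hki
      exact h2fr m (by omega) (by omega) hki
  · rw [PP_append n1 n2 x y, hx, hy]
    norm_num
  · rw [SS_append n1 n2 x y, hx]
    intro hzero
    apply hne
    linarith
end MMSetting

namespace MMSetting

variable {S : Type*} [MeasurableSpace S] [MeasurableSingletonClass S] [Countable S]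
variable {Ω : Type*} [MeasurableSpace Ω]
variable (X : MMSetting S Ω)

open LAux

omit [MeasurableSpace S] [MeasurableSingletonClass S] [Countable S] in
lemma prod_null_slice {α β : Type*} [MeasurableSpace α] [MeasurableSpace β]
    (μ : Measure α) (ν : Measure β) [SFinite ν] {W : Set (α × β)} (hW : MeasurableSet W)
    (h : μ.prod ν W = 0) : μ {x | ν (Prod.mk x ⁻¹' W) ≠ 0} = 0 := by
  have hae := (Measure.measure_prod_null hW).mp h
  rw [Filter.EventuallyEq, ae_iff] at hae
  simpa using hae

omit [MeasurableSpace S] [MeasurableSingletonClass S] [Countable S] in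
lemma exists_good_slice {α β : Type*} [MeasurableSpace α] [MeasurableSpace β]
    (μ : Measure α) (ν : Measure β) [SFinite ν] {W : Set (α × β)} (hW : MeasurableSet W)
    (h : μ.prod ν W = 0) {G : Set α} (hG : μ G ≠ 0) :
    ∃ x ∈ G, ν (Prod.mk x ⁻¹' W) = 0 := by
  by_contra hcon
  push_neg at hcon
  apply hG
  have hsub : G ⊆ {x | ν (Prod.mk x ⁻¹' W) ≠ 0} := fun x hx => hcon x hx
  exact le_antisymm (le_trans (measure_mono hsub)
    (prod_null_slice μ ν hW h).le) zero_le

lemma FRL.toLoop {i : S} {lam : ℕ → S} {n : ℕ} (h : X.FRL i lam n) : X.IsLoop i lam n :=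
  ⟨h.1, h.2.1, h.2.2.1, h.2.2.2.2⟩

lemma measurable_pairset {n1 n2 : ℕ} (b : ℝ) :
    MeasurableSet {xy : (Fin n1 → ℝ × ℝ) × (Fin n2 → ℝ × ℝ) | PP (extv xy.1) n1 = -1 ∧
      PP (extv xy.2) n2 = -1 ∧ SS (extv xy.1) n1 ≠ SS (extv xy.2) n2} := by
  have hm1 : Measurable fun xy : (Fin n1 → ℝ × ℝ) × (Fin n2 → ℝ × ℝ) =>
      PP (extv xy.1) n1 := (measurable_PP_extv n1).comp measurable_fst
  have hm2 : Measurable fun xy : (Fin n1 → ℝ × ℝ) × (Fin n2 → ℝ × ℝ) =>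
      PP (extv xy.2) n2 := (measurable_PP_extv n2).comp measurable_snd
  have hm3 : Measurable fun xy : (Fin n1 → ℝ × ℝ) × (Fin n2 → ℝ × ℝ) =>
      SS (extv xy.1) n1 := (measurable_SS_extv n1).comp measurable_fst
  have hm4 : Measurable fun xy : (Fin n1 → ℝ × ℝ) × (Fin n2 → ℝ × ℝ) =>
      SS (extv xy.2) n2 := (measurable_SS_extv n2).comp measurable_snd
  exact (hm1 (measurableSet_singleton (-1))).inter
    ((hm2 (measurableSet_singleton (-1))).inter (measurableSet_eq_fun hm3 hm4).compl)

/-- there is a constant `b` that the sum equals a.s. on `{Π = -1}` for all first-return loops -/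
lemma exists_b {i : S} (hSN : X.P i {ω | X.Ssum (X.hatτ i ω) ω ≠ 0} = 0) :
    ∃ b : ℝ, ∀ lam n, X.FRL i lam n →
      X.piK lam n {v | PP (extv v) n = -1 ∧ SS (extv v) n ≠ b} = 0 := by
  classical
  by_cases hex : ∃ nl : (ℕ → S) × ℕ, X.FRL i nl.1 nl.2 ∧
      X.piK nl.1 nl.2 {v | PP (extv v) nl.2 = -1} ≠ 0
  · obtain ⟨⟨lam1, n1⟩, hF1, hpos⟩ := hex
    -- Step A: self-pairing gives a constant on {Π = -1} for lam1
    have hK11 := X.loop_pair hSN hF1 hF1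
    obtain ⟨x0, hx0G, hx0⟩ := exists_good_slice (X.piK lam1 n1) (X.piK lam1 n1)
      (measurable_pairset (0 : ℝ)) hK11 hpos
    set b := SS (extv x0) n1 with hbdef
    have hx0P : PP (extv x0) n1 = -1 := hx0G
    have hb1 : X.piK lam1 n1 {y | PP (extv y) n1 = -1 ∧ SS (extv y) n1 ≠ b} = 0 := by
      refine measure_mono_null ?_ hx0
      rintro y ⟨hyP, hyS⟩
      refine Set.mem_preimage.mpr ?_
      exact ⟨hx0P, hyP, fun he => hyS he.symm⟩
    refine ⟨b, fun lam n hF => ?_⟩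
    have hK := X.loop_pair hSN hF1 hF
    have hG' : X.piK lam1 n1 {x | PP (extv x) n1 = -1 ∧ SS (extv x) n1 = b} ≠ 0 := by
      intro hzero
      apply hpos
      have hsub : {x : Fin n1 → ℝ × ℝ | PP (extv x) n1 = -1} ⊆
          {x | PP (extv x) n1 = -1 ∧ SS (extv x) n1 = b} ∪
          {x | PP (extv x) n1 = -1 ∧ SS (extv x) n1 ≠ b} := by
        intro x hx
        by_cases hS : SS (extv x) n1 = b
        · exact Or.inl ⟨hx, hS⟩
        · exact Or.inr ⟨hx, hS⟩
      exact le_antisymm (le_trans (measure_mono hsub)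
        (le_trans (measure_union_le _ _) (by rw [hzero, hb1, add_zero]))) zero_le
    obtain ⟨x1, hx1G, hx1⟩ := exists_good_slice (X.piK lam1 n1) (X.piK lam n)
      (measurable_pairset (0 : ℝ)) hK hG'
    refine measure_mono_null ?_ hx1
    rintro y ⟨hyP, hyS⟩
    refine Set.mem_preimage.mpr ⟨hx1G.1, hyP, ?_⟩
    rw [hx1G.2]
    exact fun he => hyS he.symm
  · push_neg at hex
    refine ⟨0, fun lam n hF => ?_⟩
    have hzero := hex (lam, n) hF
    refine measure_mono_null (fun v hv => ?_) hzero
    exact hv.1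

lemma measurable_badset {n : ℕ} (ci : ℝ) :
    MeasurableSet {v : Fin n → ℝ × ℝ | ¬(|PP (extv v) n| = 1 ∧
      SS (extv v) n = ci * (1 - PP (extv v) n))} := by
  refine MeasurableSet.compl ?_
  refine MeasurableSet.inter ?_ ?_
  · exact ((measurable_PP_extv (n := n) n).abs) (measurableSet_singleton 1)
  · exact measurableSet_eq_fun (measurable_SS_extv n)
      (measurable_const.mul (measurable_const.sub (measurable_PP_extv n)))

/-- the unified first-return-loop claim -/
lemma frl_claim {i : S} (hAiN : X.P i {ω | ¬ |X.Ai i ω| = 1} = 0)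
    (hSN : X.P i {ω | X.Ssum (X.hatτ i ω) ω ≠ 0} = 0) {b : ℝ}
    (hb : ∀ lam n, X.FRL i lam n →
      X.piK lam n {v | PP (extv v) n = -1 ∧ SS (extv v) n ≠ b} = 0)
    {lam : ℕ → S} {n : ℕ} (h : X.FRL i lam n) :
    X.piK lam n {v | ¬(|PP (extv v) n| = 1 ∧
      SS (extv v) n = b / 2 * (1 - PP (extv v) n))} = 0 := by
  have h1 := X.frl_abs_one hAiN h
  have h2 := X.loop_constraint hSN (h.toLoop)
  have h3 := hb lam n h
  refine measure_mono_null (fun v hv => ?_)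
    (measure_union_null h1 (measure_union_null h2 h3))
  simp only [Set.mem_setOf_eq, Set.mem_union] at hv ⊢
  by_cases habs : |PP (extv v) n| = 1
  · rcases (abs_eq (by norm_num : (0:ℝ) ≤ 1)).mp habs with hP | hP
    · refine Or.inr (Or.inl ⟨?_, hP, ?_⟩)
      · intro k hk0 hkn hki
        exact absurd hki (h.2.2.2.1 k hk0 hkn)
      · intro hS
        exact hv ⟨habs, by rw [hP, hS]; ring⟩
    · refine Or.inr (Or.inr ⟨hP, ?_⟩)
      intro hS
      exact hv ⟨habs, by rw [hP, hS]; ring⟩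
  · exact Or.inl habs

/-- the loop claim, by strong induction on the length -/
lemma loop_claim {i : S} (hAiN : X.P i {ω | ¬ |X.Ai i ω| = 1} = 0)
    (hSN : X.P i {ω | X.Ssum (X.hatτ i ω) ω ≠ 0} = 0) {b : ℝ}
    (hb : ∀ lam n, X.FRL i lam n →
      X.piK lam n {v | PP (extv v) n = -1 ∧ SS (extv v) n ≠ b} = 0) :
    ∀ n lam, X.IsLoop i lam n →
      X.piK lam n {v | ¬(|PP (extv v) n| = 1 ∧
        SS (extv v) n = b / 2 * (1 - PP (extv v) n))} = 0 := by
  intro n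
  induction n using Nat.strong_induction_on with
  | _ n IH =>
    intro lam hloop
    obtain ⟨h0, hn, hpos, hwp⟩ := hloop
    set t := sInf {k | 0 < k ∧ lam k = i} with ht
    have hmemn : n ∈ {k | 0 < k ∧ lam k = i} := ⟨hpos, hn⟩
    obtain ⟨htpos, hti⟩ := Nat.sInf_mem (⟨n, hmemn⟩ : {k | 0 < k ∧ lam k = i}.Nonempty)
    have htle : t ≤ n := Nat.sInf_le hmemn
    have htmin : ∀ k, 0 < k → k < t → lam k ≠ i := fun k hk0 hkt hki =>
      (Nat.notMem_of_lt_sInf hkt) ⟨hk0, hki⟩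
    obtain ⟨b0, rfl⟩ : ∃ b0, n = t + b0 := ⟨n - t, by omega⟩
    have hwp2 := X.wpp_add lam t b0
    have hwpt : X.wpp lam t ≠ 0 := fun hz => hwp (by rw [hwp2, hz, zero_mul])
    have hwps : X.wpp (fun k => lam (t + k)) b0 ≠ 0 := fun hz =>
      hwp (by rw [hwp2, hz, mul_zero])
    have hFRLt : X.FRL i lam t := ⟨h0, hti, htpos, htmin, hwpt⟩
    by_cases hb0 : b0 = 0
    · subst hb0
      exact X.frl_claim hAiN hSN hb hFRLt
    · rw [X.piK_split lam t b0 (measurable_badset (b / 2))]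
      have hnull1 : ((X.piK lam t).prod (X.piK (fun k => lam (t + k)) b0))
          ({v : Fin t → ℝ × ℝ | ¬(|PP (extv v) t| = 1 ∧
            SS (extv v) t = b / 2 * (1 - PP (extv v) t))} ×ˢ Set.univ) = 0 := by
        rw [Measure.prod_prod, X.frl_claim hAiN hSN hb hFRLt, zero_mul]
      have hnull2 : ((X.piK lam t).prod (X.piK (fun k => lam (t + k)) b0))
          (Set.univ ×ˢ {v : Fin b0 → ℝ × ℝ | ¬(|PP (extv v) b0| = 1 ∧
            SS (extv v) b0 = b / 2 * (1 - PP (extv v) b0))}) = 0 := by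
        rw [Measure.prod_prod]
        have hIH := IH b0 (by omega) (fun k => lam (t + k))
          ⟨by simpa using hti, hn, Nat.pos_of_ne_zero hb0, hwps⟩
        rw [hIH, mul_zero]
      refine measure_mono_null (fun xy hxy => ?_) (measure_union_null hnull1 hnull2)
      simp only [Set.mem_preimage, Set.mem_setOf_eq] at hxy
      simp only [Set.mem_union, Set.mem_prod, Set.mem_univ, Set.mem_setOf_eq, and_true,
        true_and]
      by_contra hcon
      push_neg at hcon
      obtain ⟨hg1, hg2⟩ := hcon
      obtain ⟨hg1a, hg1b⟩ := hg1
      obtain ⟨hg2a, hg2b⟩ := hg2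
      apply hxy
      constructor
      · rw [PP_append t b0 xy.1 xy.2, abs_mul, hg1a, hg2a, one_mul]
      · rw [PP_append t b0 xy.1 xy.2, SS_append t b0 xy.1 xy.2, hg1b, hg2b]
        ring

end MMSetting

namespace MMSetting

variable {S : Type*} [MeasurableSpace S] [MeasurableSingletonClass S] [Countable S]
variable {Ω : Type*} [MeasurableSpace Ω]
variable (X : MMSetting S Ω)

open LAux

/-- concatenation of two paths -/
def joinP (γ : ℕ → S) (g : ℕ) (δ : ℕ → S) : ℕ → S := fun k => if k < g then γ k else δ (k - g)

omit [MeasurableSpace S] [MeasurableSingletonClass S] [Countable S] in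
lemma joinP_le {γ δ : ℕ → S} {g : ℕ} (hγδ : δ 0 = γ g) : ∀ k ≤ g, joinP γ g δ k = γ k := by
  intro k hk
  rcases lt_or_eq_of_le hk with hk' | hk'
  · simp [joinP, hk']
  · subst hk'
    simp only [joinP, lt_irrefl, if_false, Nat.sub_self]
    exact hγδ

omit [MeasurableSpace S] [MeasurableSingletonClass S] [Countable S] in
lemma joinP_add (γ : ℕ → S) (g : ℕ) (δ : ℕ → S) : ∀ k, joinP γ g δ (g + k) = δ k := by
  intro k
  simp only [joinP]
  rw [if_neg (by omega), Nat.add_sub_cancel_left]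

lemma wpp_join {γ δ : ℕ → S} {g : ℕ} (hγδ : δ 0 = γ g) (d : ℕ) :
    X.wpp (joinP γ g δ) (g + d) = X.wpp γ g * X.wpp δ d := by
  rw [X.wpp_add (joinP γ g δ) g d]
  congr 1
  · exact X.wpp_congr (joinP_le hγδ)
  · exact X.wpp_congr (fun k _ => joinP_add γ g δ k)

lemma piK_join {γ δ : ℕ → S} {g : ℕ} (hγδ : δ 0 = γ g) (d : ℕ)
    {D : Set (Fin (g + d) → ℝ × ℝ)} (hD : MeasurableSet D) :
    X.piK (joinP γ g δ) (g + d) D = ((X.piK γ g).prod (X.piK δ d))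
      ((fun xy : (Fin g → ℝ × ℝ) × (Fin d → ℝ × ℝ) => Fin.append xy.1 xy.2) ⁻¹' D) := by
  rw [X.piK_split (joinP γ g δ) g d hD, X.piK_congr (joinP_le hγδ),
    X.piK_congr (path := fun k => joinP γ g δ (g + k)) (path' := δ) (n := d)
      (fun k _ => joinP_add γ g δ k)]

omit [MeasurableSpace S] [MeasurableSingletonClass S] [Countable S] in
lemma measurable_append (a b : ℕ) :
    Measurable (fun xy : (Fin a → ℝ × ℝ) × (Fin b → ℝ × ℝ) => Fin.append xy.1 xy.2) := by
  refine measurable_pi_lambda _ fun j => ?_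
  refine Fin.addCases (fun l => ?_) (fun r => ?_) j
  · simp only [Fin.append_left]
    exact (measurable_pi_apply l).comp measurable_fst
  · simp only [Fin.append_right]
    exact (measurable_pi_apply r).comp measurable_snd

/-- construction of the state constants `c j` -/
lemma exists_c {i : S} (hA : X.Pπ {ω | X.A 0 ω = 0} = 0)
    (hAiN : X.P i {ω | ¬ |X.Ai i ω| = 1} = 0)
    (hSN : X.P i {ω | X.Ssum (X.hatτ i ω) ω ≠ 0} = 0) {b : ℝ}
    (hb : ∀ lam n, X.FRL i lam n →
      X.piK lam n {v | PP (extv v) n = -1 ∧ SS (extv v) n ≠ b} = 0) (j : S) :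
    ∃ r : ℝ, ∀ g (γ : ℕ → S), γ 0 = i → γ g = j → X.wpp γ g ≠ 0 →
      X.piK γ g {x | b / 2 - SS (extv x) g ≠ PP (extv x) g * r} = 0 := by
  classical
  have hLC := X.loop_claim hAiN hSN hb
  by_cases hji : j = i
  · subst hji
    refine ⟨b / 2, fun g γ hγ0 hγg hwpγ => ?_⟩
    rcases Nat.eq_zero_or_pos g with hg | hg
    · subst hg
      have : {x : Fin 0 → ℝ × ℝ | b / 2 - SS (extv x) 0 ≠ PP (extv x) 0 * (b / 2)} = ∅ := by
        ext x
        simp [SS_zero, PP_zero]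
      rw [this, measure_empty]
    · refine measure_mono_null (fun x hx => ?_) (hLC g γ ⟨hγ0, hγg, hg, hwpγ⟩)
      rintro ⟨_, hs⟩
      apply hx
      rw [hs]
      ring
  · -- fix a return path δ : j → i
    obtain ⟨nδ, hδpos⟩ := X.irreducible j i
    obtain ⟨δ, hδ0, hδn, hδw⟩ := X.reach (i := j) hδpos.ne'
    have hdpos : 0 < nδ := Nat.pos_of_ne_zero fun h0 => hji (by
      rw [← hδ0, show (0 : ℕ) = nδ from h0.symm, hδn])
    set V : (Fin nδ → ℝ × ℝ) → ℝ :=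
      fun y => SS (extv y) nδ + PP (extv y) nδ * (b / 2) with hV
    have hVmeas : Measurable V :=
      (measurable_SS_extv nδ).add ((measurable_PP_extv nδ).mul measurable_const)
    -- generic step: from any positive path i → j, the value V is a.e. determined
    have key : ∀ g (γ : ℕ → S), γ 0 = i → γ g = j → X.wpp γ g ≠ 0 →
        ((X.piK γ g).prod (X.piK δ nδ))
          {xy | ¬ (PP (extv xy.1) g * V xy.2 = b / 2 - SS (extv xy.1) g ∧
            PP (extv xy.1) g ≠ 0)} = 0 := by
      intro g γ hγ0 hγg hwpγ
      have hδγ : δ 0 = γ g := by rw [hδ0, hγg]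
      have hloop : X.IsLoop i (joinP γ g δ) (g + nδ) := by
        refine ⟨?_, ?_, by omega, ?_⟩
        · rw [joinP_le hδγ 0 (Nat.zero_le _)]; exact hγ0
        · rw [joinP_add γ g δ nδ]; exact hδn
        · rw [X.wpp_join hδγ nδ]; exact mul_ne_zero hwpγ hδw
      have hBadNull := hLC (g + nδ) (joinP γ g δ) hloop
      rw [X.piK_join hδγ nδ (measurable_badset (b / 2))] at hBadNull
      have hPP0 : X.piK γ g {x | PP (extv x) g = 0} = 0 := by
        refine measure_mono_null (fun x hx => ?_) (X.piK_PP_ne_zero hA γ g hwpγ)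
        exact ⟨g, le_rfl, hx⟩
      have hPP0' : ((X.piK γ g).prod (X.piK δ nδ))
          ({x : Fin g → ℝ × ℝ | PP (extv x) g = 0} ×ˢ Set.univ) = 0 := by
        rw [Measure.prod_prod, hPP0, zero_mul]
      refine measure_mono_null (fun xy hxy => ?_) (measure_union_null hBadNull hPP0')
      simp only [Set.mem_setOf_eq] at hxy
      simp only [Set.mem_union, Set.mem_preimage, Set.mem_setOf_eq, Set.mem_prod,
        Set.mem_univ, and_true]
      by_contra hcon
      push_neg at hcon
      obtain ⟨hgood, hne0⟩ := hcon
      obtain ⟨_, hSid⟩ := hgood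
      apply hxy
      rw [PP_append g nδ xy.1 xy.2, SS_append g nδ xy.1 xy.2] at hSid
      refine ⟨?_, hne0⟩
      rw [hV]
      nlinarith [hSid]
    -- choose a reference path and the constant r
    obtain ⟨ng, hγpos⟩ := X.irreducible i j
    obtain ⟨γ0, hγ00, hγ0n, hγ0w⟩ := X.reach (i := i) hγpos.ne'
    have hkey0 := key ng γ0 hγ00 hγ0n hγ0w
    have hWmeas : ∀ (g : ℕ), MeasurableSet {xy : (Fin g → ℝ × ℝ) × (Fin nδ → ℝ × ℝ) |
        ¬ (PP (extv xy.1) g * V xy.2 = b / 2 - SS (extv xy.1) g ∧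
          PP (extv xy.1) g ≠ 0)} := by
      intro g
      refine MeasurableSet.compl (MeasurableSet.inter ?_ ?_)
      · exact measurableSet_eq_fun
          (((measurable_PP_extv g).comp measurable_fst).mul (hVmeas.comp measurable_snd))
          (measurable_const.sub ((measurable_SS_extv g).comp measurable_fst))
      · exact (((measurable_PP_extv g).comp measurable_fst)
          (measurableSet_singleton 0)).compl
    obtain ⟨x0, -, hx0⟩ := exists_good_slice (X.piK γ0 ng) (X.piK δ nδ) (hWmeas ng) hkey0
      (G := Set.univ) (by rw [measure_univ]; exact one_ne_zero)
    have hx0ne : PP (extv x0) ng ≠ 0 := by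
      intro h0
      have huniv : Prod.mk x0 ⁻¹' {xy : (Fin ng → ℝ × ℝ) × (Fin nδ → ℝ × ℝ) |
          ¬ (PP (extv xy.1) ng * V xy.2 = b / 2 - SS (extv xy.1) ng ∧
            PP (extv xy.1) ng ≠ 0)} = Set.univ := by
        ext y
        simp only [Set.mem_preimage, Set.mem_setOf_eq, Set.mem_univ, iff_true]
        rintro ⟨-, hnn⟩
        exact hnn h0
      rw [huniv, measure_univ] at hx0
      exact one_ne_zero hx0
    set r : ℝ := (b / 2 - SS (extv x0) ng) / PP (extv x0) ng with hr
    have hVr : X.piK δ nδ {y | V y ≠ r} = 0 := by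
      refine measure_mono_null (fun y hy => ?_) hx0
      simp only [Set.mem_setOf_eq] at hy
      simp only [Set.mem_preimage, Set.mem_setOf_eq]
      rintro ⟨hid, hne⟩
      apply hy
      rw [hr, eq_div_iff hx0ne]
      linarith [hid, mul_comm (V y) (PP (extv x0) ng)]
    refine ⟨r, fun g γ hγ0 hγg hwpγ => ?_⟩
    have hkeyγ := key g γ hγ0 hγg hwpγ
    have hunull : ((X.piK γ g).prod (X.piK δ nδ))
        (Set.univ ×ˢ {y | V y ≠ r}) = 0 := by
      rw [Measure.prod_prod, hVr, mul_zero]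
    have hTnull : ((X.piK γ g).prod (X.piK δ nδ))
        ({x : Fin g → ℝ × ℝ | b / 2 - SS (extv x) g ≠ PP (extv x) g * r} ×ˢ Set.univ) = 0 := by
      refine measure_mono_null (fun xy hxy => ?_) (measure_union_null hkeyγ hunull)
      obtain ⟨hx, -⟩ := hxy
      simp only [Set.mem_setOf_eq] at hx
      simp only [Set.mem_union, Set.mem_preimage, Set.mem_setOf_eq, Set.mem_prod,
        Set.mem_univ, true_and]
      by_contra hcon
      push_neg at hcon
      obtain ⟨hgood, hVy⟩ := hcon
      obtain ⟨hid, hne0⟩ := hgood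
      apply hx
      rw [← hVy]
      exact hid.symm
    rw [Measure.prod_prod, measure_univ, mul_one] at hTnull
    exact hTnull

end MMSetting

namespace MMSetting

variable {S : Type*} [MeasurableSpace S] [MeasurableSingletonClass S] [Countable S]
variable {Ω : Type*} [MeasurableSpace Ω]
variable (X : MMSetting S Ω)

open LAux

/-- backward direction of Lemma 6.2 -/
lemma degen_backward (i : S) (hA : X.Pπ {ω | X.A 0 ω = 0} = 0)
    (hAi : X.P i {ω | |X.Ai i ω| = 1} = 1)
    (hS : X.P i {ω | X.Ssum (X.hatτ i ω) ω = 0} = 1) :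
    ∃ c : S → ℝ, X.DegenD c := by
  classical
  have hprob := X.prob i
  have hAiN : X.P i {ω | ¬ |X.Ai i ω| = 1} = 0 := by
    have hm : MeasurableSet {ω | |X.Ai i ω| = 1} :=
      ((X.measurable_Ai i).abs) (measurableSet_singleton 1)
    have hce : {ω | ¬ |X.Ai i ω| = 1} = {ω | |X.Ai i ω| = 1}ᶜ := rfl
    rw [hce, measure_compl hm (measure_ne_top _ _), hAi]
    simp
  have hSN : X.P i {ω | X.Ssum (X.hatτ i ω) ω ≠ 0} = 0 := by
    have hm : MeasurableSet {ω | X.Ssum (X.hatτ i ω) ω = 0} :=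
      (X.measurable_Shat i) (measurableSet_singleton 0)
    have hce : {ω | X.Ssum (X.hatτ i ω) ω ≠ 0} = {ω | X.Ssum (X.hatτ i ω) ω = 0}ᶜ := rfl
    rw [hce, measure_compl hm (measure_ne_top _ _), hS]
    simp
  obtain ⟨b, hb⟩ := X.exists_b hSN
  choose c hc using fun j => X.exists_c hA hAiN hSN hb j
  have hker : ∀ a b', X.p a b' ≠ 0 →
      X.K a b' {q : ℝ × ℝ | q.1 * c b' + q.2 ≠ c a} = 0 := by
    intro a b' hp
    obtain ⟨ng, hpos⟩ := X.irreducible i a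
    obtain ⟨γ, hγ0, hγn, hγw⟩ := X.reach (i := i) hpos.ne'
    set γp : ℕ → S := fun k => if k ≤ ng then γ k else b' with hγp
    have hγp_le : ∀ k ≤ ng, γp k = γ k := fun k hk => by simp [hγp, hk]
    have hγpn1 : γp (ng + 1) = b' := by simp [hγp]
    have hwpp' : X.wpp γp (ng + 1) = X.wpp γ ng * X.p a b' := by
      unfold wpp
      rw [Finset.prod_range_succ]
      congr 1
      · exact Finset.prod_congr rfl fun k hk => by
          have hk' := Finset.mem_range.mp hk
          rw [hγp_le k (le_of_lt hk'), hγp_le (k + 1) (Nat.succ_le_of_lt hk')]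
      · rw [hγp_le ng le_rfl, hγpn1, hγn]
    have hwγp : X.wpp γp (ng + 1) ≠ 0 := by rw [hwpp']; exact mul_ne_zero hγw hp
    have hγp0 : γp 0 = i := by rw [hγp_le 0 (Nat.zero_le _), hγ0]
    have hcplus := hc b' (ng + 1) γp hγp0 hγpn1 hwγp
    have hTm : MeasurableSet {x : Fin (ng + 1) → ℝ × ℝ |
        b / 2 - SS (extv x) (ng + 1) ≠ PP (extv x) (ng + 1) * c b'} :=
      (measurableSet_eq_fun (measurable_const.sub (measurable_SS_extv (ng + 1)))
        ((measurable_PP_extv (ng + 1)).mul measurable_const)).compl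
    rw [X.piK_split γp ng 1 hTm] at hcplus
    rw [X.piK_congr (path := γp) (path' := γ) (n := ng) (fun k hk => hγp_le k hk)] at hcplus
    have hcγ := hc a ng γ hγ0 hγn hγw
    have hPP0 : X.piK γ ng {x | PP (extv x) ng = 0} = 0 := by
      refine measure_mono_null (fun x hx => ?_) (X.piK_PP_ne_zero hA γ ng hγw)
      exact ⟨ng, le_rfl, hx⟩
    set ν := X.piK (fun k => γp (ng + k)) 1 with hν
    have hn1 : ((X.piK γ ng).prod ν)
        ({x : Fin ng → ℝ × ℝ | b / 2 - SS (extv x) ng ≠ PP (extv x) ng * c a} ×ˢ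
          Set.univ) = 0 := by
      rw [Measure.prod_prod, hcγ, zero_mul]
    have hn2 : ((X.piK γ ng).prod ν)
        ({x : Fin ng → ℝ × ℝ | PP (extv x) ng = 0} ×ˢ Set.univ) = 0 := by
      rw [Measure.prod_prod, hPP0, zero_mul]
    have hTnull : ((X.piK γ ng).prod ν)
        (Set.univ ×ˢ {y : Fin 1 → ℝ × ℝ | (y 0).1 * c b' + (y 0).2 ≠ c a}) = 0 := by
      refine measure_mono_null (fun xy hxy => ?_)
        (measure_union_null hcplus (measure_union_null hn1 hn2))
      obtain ⟨-, hy⟩ := hxy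
      simp only [Set.mem_setOf_eq] at hy
      simp only [Set.mem_union, Set.mem_preimage, Set.mem_setOf_eq, Set.mem_prod,
        Set.mem_univ, and_true]
      by_contra hcon
      push_neg at hcon
      obtain ⟨h1, h2, h3⟩ := hcon
      apply hy
      rw [PP_append ng 1 xy.1 xy.2, SS_append ng 1 xy.1 xy.2] at h1
      have hSS1 : SS (extv xy.2) 1 = (xy.2 0).2 := by
        rw [SS_one]
        simp [extv]
      have hPP1 : PP (extv xy.2) 1 = (xy.2 0).1 := by
        rw [PP_one]
        simp [extv]
      rw [hSS1, hPP1] at h1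
      -- h1 : b/2 - (SSx + PPx * y2) = PPx * y1 * c b'
      -- h2 : b/2 - SSx = PPx * c a ;  h3 : PPx ≠ 0
      have hfin : PP (extv xy.1) ng * ((xy.2 0).1 * c b' + (xy.2 0).2)
          = PP (extv xy.1) ng * c a := by
        linarith [h1, h2]
      have := mul_left_cancel₀ h3 hfin
      linarith [this]
    rw [Measure.prod_prod, measure_univ, one_mul] at hTnull
    rw [hν] at hTnull
    have hcoord := X.piK_coord (fun k => γp (ng + k)) 1 0
      (E := {q : ℝ × ℝ | q.1 * c b' + q.2 ≠ c a}) (measurable_degen_K c a b')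
    rw [show {y : Fin 1 → ℝ × ℝ | (y 0).1 * c b' + (y 0).2 ≠ c a} =
        {y : Fin 1 → ℝ × ℝ | y 0 ∈ {q : ℝ × ℝ | q.1 * c b' + q.2 ≠ c a}} from rfl,
      hcoord] at hTnull
    have e1 : (fun k : ℕ => γp (ng + k)) ((0 : Fin 1) : ℕ) = a := by
      show γp (ng + 0) = a
      rw [Nat.add_zero, hγp_le ng le_rfl, hγn]
    have e2 : (fun k : ℕ => γp (ng + k)) (((0 : Fin 1) : ℕ) + 1) = b' := by
      show γp (ng + 1) = b'
      exact hγpn1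
    rw [congr_arg₂ X.K e1 e2] at hTnull
    exact hTnull
  refine ⟨c, ?_⟩
  have hPπ : X.Pπ {ω | X.A 0 ω * c (X.M 1 ω) + X.B 0 ω ≠ c (X.M 0 ω)} = 0 :=
    (X.Pπ_null_iff (X.measurable_degen_set c)).mpr
      (fun a => X.P_degen_of_K a (fun b' hp => hker a b' hp))
  rw [DegenD, ae_iff]
  exact hPπ

end MMSetting


/-- **Lemma 6.2**. In the Markov-modulated setting with `P_π(A_1 = 0) = 0` and
`P_π(B_1 = 0) < 1`, fix `i ∈ S` and suppose `P_i(|A_1^i| = 1) = 1`. Then the degeneracy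
condition (D) holds if and only if `P_i(B̂_1^i = 0) = 1`, where
`B̂_1^i = ∑_{k=1}^{τ̂(i)} Π_{k-1} B_k` and `τ̂(i)` is the first time `k ≥ 1` at which
`M_k = i` and `Π_k = 1`. -/
theorem degeneracy_iff_hat_additive_part_vanishes
    {S : Type*} [MeasurableSpace S] [MeasurableSingletonClass S] [Countable S] [Nontrivial S]
    {Ω : Type*} [MeasurableSpace Ω] (X : MMSetting S Ω)
    (hA : X.Pπ {ω | X.A 0 ω = 0} = 0) (hB : X.Pπ {ω | X.B 0 ω = 0} < 1)
    (i : S) (hAi : X.P i {ω | |X.Ai i ω| = 1} = 1) :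
    (∃ c : S → ℝ, X.DegenD c) ↔ X.P i {ω | X.Ssum (X.hatτ i ω) ω = 0} = 1 := by
  constructor
  · rintro ⟨c, hc⟩
    exact X.degen_forward i c hc
  · intro hSv
    exact X.degen_backward i hA hAi hSv

end Perpetuities
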